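/- arXiv:1708.00393 — 6 statements merged into one kernel-verified Lean document; each statement's English description precedes it below -/
import Mathlib

section
/- Let K be an algebraically closed field of characteristic different from 2, let φ ∈ K be a primitive m-th root of unity, and let m₁,…,m_n be natural numbers such that (φ; m₁,…,m_n) is generic. Let g ≥ 1 and set ξ = diag(φ^{m₁},…,φ^{m_n}, φ^{−m₁},…,φ^{−m_n}) ∈ Sp(2n,K). If (A₁,B₁,…,A_g,B_g) ∈ Sp(2n,K)^{2g} satisfies ∏_{i=1}^{g}[A_i:B_i] = ξ, then every matrix Z = diag(λ₁,…,λ_n,λ₁^{-1},…,λ_n^{-1}) (with all λ_i ∈ K^×) that commutes with every A_i and every B_i satisfies Z² = I_{2n}; that is, every λ_i equals 1 or −1. -/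
open Matrix

/-- The standard symplectic structure matrix `J = [[0, I_n], [−I_n, 0]]`. -/
def sympJ (n : ℕ) (K : Type*) [Field K] :
    Matrix (Fin n ⊕ Fin n) (Fin n ⊕ Fin n) K :=
  Matrix.fromBlocks 0 1 (-1) 0

/-- `A` belongs to `Sp(2n, K)`, i.e. `Aᵀ J A = J`. -/
def IsSymplectic {n : ℕ} {K : Type*} [Field K]
    (A : Matrix (Fin n ⊕ Fin n) (Fin n ⊕ Fin n) K) : Prop :=
  Aᵀ * sympJ n K * A = sympJ n K

/-- `(φ; m₁, …, m_n)` is generic: for all disjoint subsets `J`, `L` of indices, not both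
empty, `∏_{j∈J} φ^{m_j} ≠ ∏_{l∈L} φ^{m_l}`, and `φ^{2 m_i} ≠ 1` for every `i`. -/
def Generic {K : Type*} [Field K] (φ : K) {n : ℕ} (m : Fin n → ℕ) : Prop :=
  (∀ J L : Finset (Fin n), Disjoint J L → (J.Nonempty ∨ L.Nonempty) →
    ∏ j ∈ J, φ ^ m j ≠ ∏ l ∈ L, φ ^ m l) ∧
  ∀ i, φ ^ (2 * m i) ≠ 1

theorem statement0 {K : Type*} [Field K] [IsAlgClosed K] (h2 : (2 : K) ≠ 0)
    {m : ℕ} {φ : K} (hφ : IsPrimitiveRoot φ m)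
    {n : ℕ} (mm : Fin n → ℕ) (hgen : Generic φ mm)
    {g : ℕ} (hg : 1 ≤ g)
    (ξ : Matrix (Fin n ⊕ Fin n) (Fin n ⊕ Fin n) K)
    (hξ : ξ = Matrix.diagonal (Sum.elim (fun i => φ ^ mm i) (fun i => (φ ^ mm i)⁻¹)))
    (A B : Fin g → Matrix (Fin n ⊕ Fin n) (Fin n ⊕ Fin n) K)
    (hA : ∀ i, IsSymplectic (A i)) (hB : ∀ i, IsSymplectic (B i))
    (hprod : (List.ofFn (fun i => A i * B i * (A i)⁻¹ * (B i)⁻¹)).prod = ξ)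
    (lam : Fin n → K) (hlam : ∀ i, lam i ≠ 0)
    (Z : Matrix (Fin n ⊕ Fin n) (Fin n ⊕ Fin n) K)
    (hZ : Z = Matrix.diagonal (Sum.elim lam (fun i => (lam i)⁻¹)))
    (hcommA : ∀ i, Z * A i = A i * Z) (hcommB : ∀ i, Z * B i = B i * Z) :
    ∀ i, lam i = 1 ∨ lam i = -1 := by
  classical
  intro i₀
  by_contra hcon
  push_neg at hcon
  obtain ⟨h1, hneg1⟩ := hcon
  set μ := lam i₀ with hμ
  have hμ0 : μ ≠ 0 := hlam i₀
  have hμ2 : μ * μ ≠ 1 := by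
    intro h
    rcases mul_self_eq_one_iff.mp h with h | h
    · exact h1 h
    · exact hneg1 h
  set d : (Fin n ⊕ Fin n) → K := Sum.elim lam (fun i => (lam i)⁻¹) with hd
  -- block vanishing for matrices commuting with Z
  have hblock : ∀ M : Matrix (Fin n ⊕ Fin n) (Fin n ⊕ Fin n) K,
      Z * M = M * Z → ∀ a b, d a ≠ d b → M a b = 0 := by
    intro M hM a b hab
    have h := congrFun (congrFun hM a) b
    rw [hZ] at h
    simp only [Matrix.diagonal_mul, Matrix.mul_diagonal] at h
    have h' : M a b * (d a - d b) = 0 := by linear_combination h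
    rcases mul_eq_zero.mp h' with h' | h'
    · exact h'
    · exact absurd (sub_eq_zero.mp h') hab
  set p : (Fin n ⊕ Fin n) → Prop := fun x => d x = μ with hp
  set r : Matrix (Fin n ⊕ Fin n) (Fin n ⊕ Fin n) K →
      Matrix {x // p x} {x // p x} K :=
    fun M => M.submatrix Subtype.val Subtype.val with hr
  have hone : r 1 = 1 := by
    ext a b
    simp [hr, Matrix.one_apply, Subtype.val_inj]
  have hmul : ∀ M N : Matrix (Fin n ⊕ Fin n) (Fin n ⊕ Fin n) K, Z * M = M * Z → Z * N = N * Z → r (M * N) = r M * r N := by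
    intro M N hM hN
    ext a b
    simp only [hr, Matrix.submatrix_apply, Matrix.mul_apply]
    rw [← Fintype.sum_subtype_add_sum_subtype p
      (fun c => M a.val c * N c b.val)]
    have hz : ∑ c : {x // ¬ p x}, M a.val c.val * N c.val b.val = 0 := by
      apply Finset.sum_eq_zero
      intro c _
      have : N c.val b.val = 0 := by
        apply hblock N hN
        intro h
        exact c.2 (h.trans b.2)
      rw [this, mul_zero]
    rw [hz, add_zero]
  -- symplectic matrices are invertible
  have hJJ : sympJ n K * (sympJ n K)ᵀ = 1 := by
    simp [sympJ, Matrix.fromBlocks_transpose, Matrix.fromBlocks_multiply,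
      ← Matrix.fromBlocks_one]
  have hJdet : (sympJ n K).det * (sympJ n K).det = 1 := by
    have h := congrArg Matrix.det hJJ
    rwa [Matrix.det_mul, Matrix.det_transpose, Matrix.det_one] at h
  have hJne : (sympJ n K).det ≠ 0 := by
    intro h
    rw [h, zero_mul] at hJdet
    exact zero_ne_one hJdet
  have hdet : ∀ M : Matrix (Fin n ⊕ Fin n) (Fin n ⊕ Fin n) K, IsSymplectic M → IsUnit M.det := by
    intro M hM
    have h := congrArg Matrix.det hM
    rw [Matrix.det_mul, Matrix.det_mul, Matrix.det_transpose] at h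
    have h1 : M.det * M.det * (sympJ n K).det = 1 * (sympJ n K).det := by
      linear_combination h
    exact IsUnit.of_mul_eq_one _ (mul_right_cancel₀ hJne h1)
  have hcommInv : ∀ M : Matrix (Fin n ⊕ Fin n) (Fin n ⊕ Fin n) K, IsSymplectic M → Z * M = M * Z → Z * M⁻¹ = M⁻¹ * Z := by
    intro M hs hc
    have h1 := Matrix.mul_nonsing_inv M (hdet M hs)
    have h2 := Matrix.nonsing_inv_mul M (hdet M hs)
    calc Z * M⁻¹ = M⁻¹ * M * (Z * M⁻¹) := by rw [h2, one_mul]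
      _ = M⁻¹ * (M * Z) * M⁻¹ := by noncomm_ring
      _ = M⁻¹ * (Z * M) * M⁻¹ := by rw [hc]
      _ = M⁻¹ * Z * (M * M⁻¹) := by noncomm_ring
      _ = M⁻¹ * Z := by rw [h1, mul_one]
  have hmulcomm : ∀ M N : Matrix (Fin n ⊕ Fin n) (Fin n ⊕ Fin n) K, Z * M = M * Z → Z * N = N * Z →
      Z * (M * N) = (M * N) * Z := by
    intro M N hM hN
    calc Z * (M * N) = (Z * M) * N := by rw [mul_assoc]
      _ = M * (Z * N) := by rw [hM, mul_assoc]
      _ = (M * N) * Z := by rw [hN, mul_assoc]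
  -- the main list lemma
  have hlist : ∀ l : List (Matrix (Fin n ⊕ Fin n) (Fin n ⊕ Fin n) K),
      (∀ M ∈ l, Z * M = M * Z ∧ (r M).det = 1) →
      Z * l.prod = l.prod * Z ∧ (r l.prod).det = 1 := by
    intro l
    induction l with
    | nil =>
      intro _
      refine ⟨by simp, ?_⟩
      rw [List.prod_nil, hone, Matrix.det_one]
    | cons M t ih =>
      intro h
      have hM := h M List.mem_cons_self
      have ht := ih (fun N hN => h N (List.mem_cons_of_mem _ hN))
      rw [List.prod_cons]
      refine ⟨hmulcomm _ _ hM.1 ht.1, ?_⟩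
      rw [hmul M t.prod hM.1 ht.1, Matrix.det_mul, hM.2, ht.2, one_mul]
  -- each commutator works
  have hcomms : ∀ i : Fin g,
      Z * (A i * B i * (A i)⁻¹ * (B i)⁻¹) = (A i * B i * (A i)⁻¹ * (B i)⁻¹) * Z ∧
      (r (A i * B i * (A i)⁻¹ * (B i)⁻¹)).det = 1 := by
    intro i
    have hAi := hcommA i
    have hBi := hcommB i
    have hAinv := hcommInv (A i) (hA i) hAi
    have hBinv := hcommInv (B i) (hB i) hBi
    have c1 := hmulcomm _ _ hAi hBi
    have c2 := hmulcomm _ _ c1 hAinv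
    refine ⟨hmulcomm _ _ c2 hBinv, ?_⟩
    have e1 : r (A i * B i * (A i)⁻¹ * (B i)⁻¹)
        = r (A i) * r (B i) * r ((A i)⁻¹) * r ((B i)⁻¹) := by
      rw [hmul _ _ c2 hBinv, hmul _ _ c1 hAinv, hmul _ _ hAi hBi]
    have eA : (r (A i)).det * (r ((A i)⁻¹)).det = 1 := by
      rw [← Matrix.det_mul, ← hmul _ _ hAi hAinv,
        Matrix.mul_nonsing_inv _ (hdet _ (hA i)), hone, Matrix.det_one]
    have eB : (r (B i)).det * (r ((B i)⁻¹)).det = 1 := by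
      rw [← Matrix.det_mul, ← hmul _ _ hBi hBinv,
        Matrix.mul_nonsing_inv _ (hdet _ (hB i)), hone, Matrix.det_one]
    rw [e1, Matrix.det_mul, Matrix.det_mul, Matrix.det_mul]
    linear_combination ((r (B i)).det * (r ((B i)⁻¹)).det) * eA + eB
  -- determinant of the restriction of ξ is 1
  have hξdet : (r ξ).det = 1 := by
    rw [← hprod]
    refine (hlist _ ?_).2
    intro M hM
    obtain ⟨i, rfl⟩ := List.mem_ofFn.mp hM
    exact hcomms i
  -- compute that determinant
  set D : (Fin n ⊕ Fin n) → K :=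
    Sum.elim (fun i => φ ^ mm i) (fun i => (φ ^ mm i)⁻¹) with hD
  have hrdiag : r ξ = Matrix.diagonal (fun x : {x // p x} => D x.val) := by
    rw [hξ]
    ext a b
    simp [hr, Matrix.diagonal_apply, Subtype.val_inj, hD]
  set Jf : Finset (Fin n) := Finset.univ.filter (fun j => lam j = μ) with hJf
  set Lf : Finset (Fin n) := Finset.univ.filter (fun l => (lam l)⁻¹ = μ) with hLf
  have key : (∏ j ∈ Jf, φ ^ mm j) * (∏ l ∈ Lf, (φ ^ mm l)⁻¹) = 1 := by
    rw [hrdiag, Matrix.det_diagonal] at hξdet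
    have e2 : ∏ x : {x // p x}, D x.val = ∏ x ∈ Finset.univ.filter p, D x :=
      (Finset.prod_subtype _ (by simp) _).symm
    rw [e2, Finset.prod_filter, Fintype.prod_sum_type] at hξdet
    have e3 : (∏ j : Fin n, if p (Sum.inl j) then D (Sum.inl j) else 1)
        = ∏ j ∈ Jf, φ ^ mm j := by
      rw [hJf, Finset.prod_filter]
      apply Finset.prod_congr rfl
      intro j _
      simp [hp, hd, hD]
    have e4 : (∏ l : Fin n, if p (Sum.inr l) then D (Sum.inr l) else 1)
        = ∏ l ∈ Lf, (φ ^ mm l)⁻¹ := by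
      rw [hLf, Finset.prod_filter]
      apply Finset.prod_congr rfl
      intro l _
      simp [hp, hd, hD]
    rw [e3, e4] at hξdet
    exact hξdet
  rw [Finset.prod_inv_distrib] at key
  have hQ : (∏ l ∈ Lf, φ ^ mm l) ≠ 0 := by
    intro h
    rw [h, _root_.inv_zero, mul_zero] at key
    exact zero_ne_one key
  have hPQ : (∏ j ∈ Jf, φ ^ mm j) = ∏ l ∈ Lf, φ ^ mm l :=
    (mul_inv_eq_one₀ hQ).mp key
  have hdisj : Disjoint Jf Lf := by
    rw [Finset.disjoint_left]
    intro x hxJ hxL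
    rw [hJf, Finset.mem_filter] at hxJ
    rw [hLf, Finset.mem_filter] at hxL
    apply hμ2
    linear_combination (-(lam x)⁻¹) * hxJ.2 + (-μ) * hxL.2 + mul_inv_cancel₀ (hlam x)
  exact hgen.1 Jf Lf hdisj
    (Or.inl ⟨i₀, by rw [hJf, Finset.mem_filter]; exact ⟨Finset.mem_univ _, rfl⟩⟩) hPQ
end

section
/- Let K be an algebraically closed field of characteristic different from 2, let φ ∈ K be a primitive m-th root of unity, and let m₁,…,m_n be natural numbers such that (φ; m₁,…,m_n) is generic. Let g ≥ 1 and set ξ = diag(φ^{m₁},…,φ^{m_n}, φ^{−m₁},…,φ^{−m_n}) ∈ Sp(2n,K). If (A₁,B₁,…,A_g,B_g) ∈ Sp(2n,K)^{2g} satisfies ∏_{i=1}^{g}[A_i:B_i] = ξ, then every matrix C ∈ Mat_{2n}(K) satisfying Cᵀ J = −J C (i.e., C lies in the symplectic Lie algebra sp(2n,K)) and commuting with every A_i and every B_i must be zero. -/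
open Matrix

section AuxSubm
variable {K : Type*} [Field K] {ι : Type*} [Fintype ι] [DecidableEq ι]

/-- Submatrix on the indices where `e` takes value `c`. -/
def subm (e : ι → K) (c : K) [DecidablePred fun j : ι => e j = c]
    (M : Matrix ι ι K) : Matrix {j : ι // e j = c} {j : ι // e j = c} K :=
  M.submatrix Subtype.val Subtype.val

variable (e : ι → K) (c : K) [DecidablePred fun j : ι => e j = c]

set_option linter.unusedSectionVars false in
lemma subm_one : subm e c (1 : Matrix ι ι K) = 1 := by
  ext j k
  simp [subm, Matrix.one_apply, Subtype.val_inj]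

set_option linter.unusedSectionVars false in
lemma block_zero {X : Matrix ι ι K} (hX : X * Matrix.diagonal e = Matrix.diagonal e * X)
    {j l : ι} (h : e j ≠ e l) : X j l = 0 := by
  have h1 : X j l * e l = e j * X j l := by
    have := congrFun (congrFun hX j) l
    simpa [Matrix.mul_diagonal, Matrix.diagonal_mul] using this
  by_contra h0
  exact h (mul_left_cancel₀ h0 (by rw [h1, mul_comm])).symm

set_option linter.unusedSectionVars false in
lemma subm_mul {X : Matrix ι ι K} (Y : Matrix ι ι K)
    (hX : X * Matrix.diagonal e = Matrix.diagonal e * X) :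
    subm e c (X * Y) = subm e c X * subm e c Y := by
  ext j k
  show (X * Y) j.val k.val = ∑ l : {j : ι // e j = c}, X j.val l.val * Y l.val k.val
  rw [Matrix.mul_apply]
  rw [← Finset.sum_subtype (Finset.univ.filter fun l : ι => e l = c)
    (by simp) (fun l => X j.val l * Y l k.val)]
  symm
  apply Finset.sum_subset (Finset.filter_subset _ _)
  intro l _ hl
  simp only [Finset.mem_filter, Finset.mem_univ, true_and] at hl
  rw [block_zero e hX (j.prop.trans_ne (Ne.symm hl)), zero_mul]

set_option linter.unusedSectionVars false in
lemma comm_prod {D : Matrix ι ι K} (L : List (Matrix ι ι K))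
    (h : ∀ M ∈ L, M * D = D * M) : L.prod * D = D * L.prod := by
  induction L with
  | nil => simp
  | cons M T ih =>
    have hT := ih fun N hN => h N (List.mem_cons_of_mem _ hN)
    have hM := h M (List.mem_cons_self)
    simp only [List.prod_cons]
    rw [mul_assoc, hT, ← mul_assoc, hM, mul_assoc]

set_option linter.unusedSectionVars false in
lemma subm_det_prod (L : List (Matrix ι ι K))
    (h : ∀ M ∈ L, M * Matrix.diagonal e = Matrix.diagonal e * M ∧ (subm e c M).det = 1) :
    (subm e c L.prod).det = 1 := by
  induction L with
  | nil => simp [subm_one]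
  | cons M T ih =>
    have hT : ∀ N ∈ T, N * Matrix.diagonal e = Matrix.diagonal e * N ∧ (subm e c N).det = 1 :=
      fun N hN => h N (List.mem_cons_of_mem _ hN)
    simp only [List.prod_cons]
    rw [subm_mul e c _ (h M (List.mem_cons_self)).1, Matrix.det_mul,
      (h M (List.mem_cons_self)).2, one_mul, ih hT]

set_option linter.unusedSectionVars false in
lemma det_list_prod' (L : List (Matrix ι ι K)) :
    L.prod.det = (L.map Matrix.det).prod := by
  induction L with
  | nil => simp
  | cons M T ih => simp [Matrix.det_mul, ih]

end AuxSubm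

lemma sympJ_mul_transpose (n : ℕ) (K : Type*) [Field K] :
    sympJ n K * (sympJ n K)ᵀ = 1 := by
  simp [sympJ, Matrix.fromBlocks_transpose, Matrix.fromBlocks_multiply,
    ← Matrix.fromBlocks_one]

lemma det_sympJ_ne_zero (n : ℕ) (K : Type*) [Field K] : (sympJ n K).det ≠ 0 := by
  intro h
  have := congrArg Matrix.det (sympJ_mul_transpose n K)
  rw [Matrix.det_mul, h, zero_mul, Matrix.det_one] at this
  exact zero_ne_one (α := K) this

lemma isSymplectic_isUnit_det {n : ℕ} {K : Type*} [Field K]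
    {A : Matrix (Fin n ⊕ Fin n) (Fin n ⊕ Fin n) K} (hA : IsSymplectic A) :
    IsUnit A.det := by
  have h := congrArg Matrix.det hA
  rw [Matrix.det_mul, Matrix.det_mul, Matrix.det_transpose] at h
  rw [isUnit_iff_ne_zero]
  intro h0
  rw [h0, mul_zero] at h
  exact det_sympJ_ne_zero n K h.symm

lemma inv_comm {n : ℕ} {K : Type*} [Field K]
    {A C : Matrix (Fin n ⊕ Fin n) (Fin n ⊕ Fin n) K} (hA : IsSymplectic A)
    (h : C * A = A * C) : C * A⁻¹ = A⁻¹ * C := by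
  have hu := isSymplectic_isUnit_det hA
  calc C * A⁻¹ = A⁻¹ * A * (C * A⁻¹) := by rw [Matrix.nonsing_inv_mul _ hu, one_mul]
    _ = A⁻¹ * (A * C) * A⁻¹ := by noncomm_ring
    _ = A⁻¹ * (C * A) * A⁻¹ := by rw [h]
    _ = A⁻¹ * C * (A * A⁻¹) := by noncomm_ring
    _ = A⁻¹ * C := by rw [Matrix.mul_nonsing_inv _ hu, mul_one]

lemma det_commutator {n : ℕ} {K : Type*} [Field K]
    {A B : Matrix (Fin n ⊕ Fin n) (Fin n ⊕ Fin n) K}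
    (hA : IsSymplectic A) (hB : IsSymplectic B) :
    (A * B * A⁻¹ * B⁻¹).det = 1 := by
  have ha := isSymplectic_isUnit_det hA
  have hb := isSymplectic_isUnit_det hB
  rw [isUnit_iff_ne_zero] at ha hb
  rw [Matrix.det_mul, Matrix.det_mul, Matrix.det_mul, Matrix.det_nonsing_inv,
    Matrix.det_nonsing_inv]
  simp only [Ring.inverse_eq_inv']
  field_simp

lemma ham_diag {n : ℕ} {K : Type*} [Field K]
    {C : Matrix (Fin n ⊕ Fin n) (Fin n ⊕ Fin n) K}
    (hham : Cᵀ * sympJ n K = -(sympJ n K * C)) (i : Fin n) :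
    C (Sum.inr i) (Sum.inr i) = - C (Sum.inl i) (Sum.inl i) := by
  have h := congrFun (congrFun hham (Sum.inl i)) (Sum.inr i)
  simp [Matrix.mul_apply, sympJ, Fintype.sum_sum_type, Matrix.one_apply,
    Finset.sum_ite_eq, Finset.mul_sum, mul_ite] at h
  rw [h, neg_neg]

theorem statement1 {K : Type*} [Field K] [IsAlgClosed K] (h2 : (2 : K) ≠ 0)
    {m : ℕ} {φ : K} (hφ : IsPrimitiveRoot φ m)
    {n : ℕ} (mm : Fin n → ℕ) (hgen : Generic φ mm)
    {g : ℕ} (hg : 1 ≤ g)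
    (ξ : Matrix (Fin n ⊕ Fin n) (Fin n ⊕ Fin n) K)
    (hξ : ξ = Matrix.diagonal (Sum.elim (fun i => φ ^ mm i) (fun i => (φ ^ mm i)⁻¹)))
    (A B : Fin g → Matrix (Fin n ⊕ Fin n) (Fin n ⊕ Fin n) K)
    (hA : ∀ i, IsSymplectic (A i)) (hB : ∀ i, IsSymplectic (B i))
    (hprod : (List.ofFn (fun i => A i * B i * (A i)⁻¹ * (B i)⁻¹)).prod = ξ)
    (C : Matrix (Fin n ⊕ Fin n) (Fin n ⊕ Fin n) K)
    (hham : Cᵀ * sympJ n K = -(sympJ n K * C))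
    (hcommA : ∀ i, C * A i = A i * C) (hcommB : ∀ i, C * B i = B i * C) :
    C = 0 := by
  classical
  -- dispose of the trivial case n = 0
  rcases Nat.eq_zero_or_pos n with h0 | hn
  · subst h0
    ext j k
    exact isEmptyElim j
  set d : Fin n ⊕ Fin n → K :=
    Sum.elim (fun i => φ ^ mm i) (fun i => (φ ^ mm i)⁻¹) with hd
  have hmm : ∀ i, mm i ≠ 0 := by
    intro i h
    exact hgen.2 i (by rw [h, Nat.mul_zero, pow_zero])
  -- the list of commutators
  set Lst := List.ofFn (fun i => A i * B i * (A i)⁻¹ * (B i)⁻¹) with hLst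
  have hmem : ∀ M ∈ Lst, ∃ i, M = A i * B i * (A i)⁻¹ * (B i)⁻¹ := by
    intro M hM
    rw [hLst, List.mem_ofFn] at hM
    obtain ⟨i, rfl⟩ := hM
    exact ⟨i, rfl⟩
  -- C commutes with every element of the list
  have hcommM : ∀ M ∈ Lst, M * C = C * M := by
    intro M hM
    obtain ⟨i, rfl⟩ := hmem M hM
    have cA : Commute C (A i) := hcommA i
    have cB : Commute C (B i) := hcommB i
    have cAi : Commute C ((A i)⁻¹) := inv_comm (hA i) (hcommA i)
    have cBi : Commute C ((B i)⁻¹) := inv_comm (hB i) (hcommB i)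
    exact (((cA.mul_right cB).mul_right cAi).mul_right cBi).eq.symm
  have hcommξ : ξ * C = C * ξ := by
    rw [← hprod]
    exact comm_prod Lst hcommM
  -- determinant of ξ is 1
  have hdetξ : ξ.det = 1 := by
    rw [← hprod, det_list_prod']
    apply List.prod_eq_one
    intro x hx
    rw [List.mem_map] at hx
    obtain ⟨M, hM, rfl⟩ := hx
    obtain ⟨i, rfl⟩ := hmem M hM
    exact det_commutator (hA i) (hB i)
  -- φ is nonzero
  have hφ0 : φ ≠ 0 := by
    intro h
    rw [hξ, Matrix.det_diagonal] at hdetξ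
    have : ∏ j : Fin n ⊕ Fin n, d j = 0 := by
      apply Finset.prod_eq_zero (Finset.mem_univ (Sum.inl (⟨0, hn⟩ : Fin n)))
      simp [hd, h, zero_pow (hmm _)]
    rw [this] at hdetξ
    exact zero_ne_one (α := K) hdetξ
  -- key genericity consequences
  have key1 : ∀ i i' : Fin n, i ≠ i' → φ ^ mm i ≠ φ ^ mm i' := by
    intro i i' h
    have := hgen.1 {i} {i'} (Finset.disjoint_singleton.mpr h)
      (Or.inl ⟨i, Finset.mem_singleton_self i⟩)
    simpa using this
  have key2 : ∀ i i' : Fin n, φ ^ mm i * φ ^ mm i' ≠ 1 := by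
    intro i i'
    by_cases h : i = i'
    · subst h
      intro hh
      exact hgen.2 i (by rw [two_mul, pow_add]; exact hh)
    · have := hgen.1 {i, i'} ∅ (by simp) (Or.inl ⟨i, by simp⟩)
      simpa [Finset.prod_pair h] using this
  -- the diagonal of ξ is injective
  have hd' : ∀ j k : Fin n ⊕ Fin n, j ≠ k → d j ≠ d k := by
    rintro (i | i) (i' | i') hjk
    · exact key1 i i' (fun h => hjk (by rw [h]))
    · intro h
      apply key2 i i'
      rw [hd] at h
      simp only [Sum.elim_inl, Sum.elim_inr] at h
      rw [h, inv_mul_cancel₀ (pow_ne_zero _ hφ0)]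
    · intro h
      apply key2 i' i
      rw [hd] at h
      simp only [Sum.elim_inl, Sum.elim_inr] at h
      rw [← h, inv_mul_cancel₀ (pow_ne_zero _ hφ0)]
    · intro h
      rw [hd] at h
      simp only [Sum.elim_inr] at h
      exact key1 i i' (fun hh => hjk (by rw [hh])) (inv_injective h)
  -- C is diagonal
  set e : Fin n ⊕ Fin n → K := fun j => C j j with he
  have hCoff : ∀ j k : Fin n ⊕ Fin n, j ≠ k → C j k = 0 := by
    intro j k hjk
    have hcc := congrFun (congrFun hcommξ j) k
    rw [hξ, Matrix.diagonal_mul, Matrix.mul_diagonal] at hcc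
    by_contra hC0
    exact hd' j k hjk (mul_right_cancel₀ hC0 (by rw [hcc, mul_comm]))
  have hCd : C = Matrix.diagonal e := by
    ext j k
    rcases eq_or_ne j k with rfl | hjk
    · simp [Matrix.diagonal_apply_eq, he]
    · rw [Matrix.diagonal_apply_ne _ hjk]
      exact hCoff j k hjk
  -- suppose C ≠ 0 and derive a contradiction
  by_contra hC0
  have hex : ∃ j, e j ≠ 0 := by
    by_contra hh
    push_neg at hh
    apply hC0
    ext j k
    rcases eq_or_ne j k with rfl | hjk
    · exact hh j
    · exact hCoff j k hjk
  obtain ⟨j₀, hj₀⟩ := hex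
  set c : K := e j₀ with hc
  -- every element of the list commutes with diagonal e and has unit submatrix det
  have hsub : ∀ M ∈ Lst, M * Matrix.diagonal e = Matrix.diagonal e * M ∧
      (subm e c M).det = 1 := by
    intro M hM
    obtain ⟨i, hMi⟩ := hmem M hM
    have cA : Commute (A i) (Matrix.diagonal e) := by rw [← hCd]; exact (hcommA i).symm
    have cB : Commute (B i) (Matrix.diagonal e) := by rw [← hCd]; exact (hcommB i).symm
    have cAi : Commute ((A i)⁻¹) (Matrix.diagonal e) := by
      rw [← hCd]; exact (inv_comm (hA i) (hcommA i)).symm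
    have cBi : Commute ((B i)⁻¹) (Matrix.diagonal e) := by
      rw [← hCd]; exact (inv_comm (hB i) (hcommB i)).symm
    constructor
    · rw [hMi]
      exact (((cA.mul_left cB).mul_left cAi).mul_left cBi).eq
    · have hsplit : subm e c M =
          subm e c (A i) * subm e c (B i) * subm e c ((A i)⁻¹) * subm e c ((B i)⁻¹) := by
        rw [hMi, subm_mul e c _ ((cA.mul_left cB).mul_left cAi).eq,
          subm_mul e c _ (cA.mul_left cB).eq, subm_mul e c _ cA.eq]
      have hinvA : subm e c (A i) * subm e c ((A i)⁻¹) = 1 := by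
        rw [← subm_mul e c _ cA.eq, Matrix.mul_nonsing_inv _ (isSymplectic_isUnit_det (hA i)),
          subm_one]
      have hinvB : subm e c (B i) * subm e c ((B i)⁻¹) = 1 := by
        rw [← subm_mul e c _ cB.eq, Matrix.mul_nonsing_inv _ (isSymplectic_isUnit_det (hB i)),
          subm_one]
      have hdA : (subm e c (A i)).det * (subm e c ((A i)⁻¹)).det = 1 := by
        rw [← Matrix.det_mul, hinvA, Matrix.det_one]
      have hdB : (subm e c (B i)).det * (subm e c ((B i)⁻¹)).det = 1 := by
        rw [← Matrix.det_mul, hinvB, Matrix.det_one]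
      rw [hsplit, Matrix.det_mul, Matrix.det_mul, Matrix.det_mul]
      calc (subm e c (A i)).det * (subm e c (B i)).det * (subm e c ((A i)⁻¹)).det *
            (subm e c ((B i)⁻¹)).det
          = ((subm e c (A i)).det * (subm e c ((A i)⁻¹)).det) *
            ((subm e c (B i)).det * (subm e c ((B i)⁻¹)).det) := by ring
        _ = 1 := by rw [hdA, hdB, one_mul]
  have hdet1 : (subm e c ξ).det = 1 := by
    rw [← hprod]
    exact subm_det_prod e c Lst hsub
  -- compute the submatrix of ξ
  have hsξ : subm e c ξ = Matrix.diagonal (fun j : {j : Fin n ⊕ Fin n // e j = c} => d j.val) := by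
    ext j k
    rw [hξ]
    show Matrix.diagonal d j.val k.val = _
    rcases eq_or_ne j k with rfl | hjk
    · rw [Matrix.diagonal_apply_eq, Matrix.diagonal_apply_eq]
    · rw [Matrix.diagonal_apply_ne _ hjk,
        Matrix.diagonal_apply_ne _ (fun h => hjk (Subtype.ext h))]
  rw [hsξ, Matrix.det_diagonal] at hdet1
  -- convert the product over the subtype into products over index sets
  set Jset : Finset (Fin n) := Finset.univ.filter (fun i => e (Sum.inl i) = c) with hJset
  set Lset : Finset (Fin n) := Finset.univ.filter (fun i => e (Sum.inr i) = c) with hLset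
  have hsplitprod : (∏ j : {j : Fin n ⊕ Fin n // e j = c}, d j.val) =
      (∏ i ∈ Jset, φ ^ mm i) * (∏ i ∈ Lset, (φ ^ mm i)⁻¹) := by
    rw [← Finset.prod_subtype (Finset.univ.filter fun j : Fin n ⊕ Fin n => e j = c)
      (by simp) d]
    rw [Finset.prod_filter, Fintype.prod_sum_type]
    rw [hJset, hLset, Finset.prod_filter, Finset.prod_filter]
    simp only [hd, Sum.elim_inl, Sum.elim_inr]
  rw [hsplitprod] at hdet1
  rw [Finset.prod_inv_distrib] at hdet1
  have hLne : (∏ i ∈ Lset, φ ^ mm i) ≠ 0 :=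
    Finset.prod_ne_zero_iff.mpr fun i _ => pow_ne_zero _ hφ0
  have heq : (∏ i ∈ Jset, φ ^ mm i) = ∏ i ∈ Lset, φ ^ mm i := by
    rw [← div_eq_mul_inv, div_eq_one_iff_eq hLne] at hdet1
    exact hdet1
  -- the two index sets are disjoint
  have hcc : c ≠ -c := by
    intro h
    apply hj₀
    have h2c : 2 * c = 0 := by linear_combination h
    rcases mul_eq_zero.mp h2c with h' | h'
    · exact absurd h' h2
    · exact h'
  have hdisj : Disjoint Jset Lset := by
    rw [Finset.disjoint_left]
    intro i hiJ hiL
    rw [hJset, Finset.mem_filter] at hiJ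
    rw [hLset, Finset.mem_filter] at hiL
    apply hcc
    nth_rewrite 1 [← hiL.2]
    nth_rewrite 1 [← hiJ.2]
    exact ham_diag hham i
  -- one of them is nonempty
  have hne : Jset.Nonempty ∨ Lset.Nonempty := by
    rcases j₀ with i | i
    · left
      exact ⟨i, by rw [hJset, Finset.mem_filter]; exact ⟨Finset.mem_univ i, hc.symm⟩⟩
    · right
      exact ⟨i, by rw [hLset, Finset.mem_filter]; exact ⟨Finset.mem_univ i, hc.symm⟩⟩
  exact hgen.1 Jset Lset hdisj hne heq
end

section
/- Let K be an algebraically closed field of characteristic different from 2, let φ ∈ K be a primitive m-th root of unity, let m₁,…,m_n be natural numbers such that (φ; m₁,…,m_n) is generic, let g ≥ 1, and set ξ = diag(φ^{m₁},…,φ^{m_n}, φ^{−m₁},…,φ^{−m_n}) ∈ Sp(2n,K). Let μ₂^n denote the group of diagonal matrices diag(ε₁,…,ε_n,ε₁,…,ε_n) with all ε_i ∈ {1,−1}, and let H be a subgroup of μ₂^n with −I_{2n} ∈ H and |H| = 2^{k+1}. Then there exist pairwise disjoint (possibly empty) subsets Π₁,…,Π_{2^k} of {1,…,n} whose union is {1,…,n}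 such that the set U_{n,H} = {(A₁,B₁,…,A_g,B_g) ∈ Sp(2n,K)^{2g} : ∏_{i=1}^{g}[A_i:B_i] = ξ and every A_i and every B_i commutes with every element of H} is in bijection with the product ∏_{i=1}^{2^k} U_{|Π_i|}^{Π_i(ξ)}. -/
open Matrix


/-- The matrix `diag²(ε₁,…,ε_a) = diag(ε₁,…,ε_a,ε₁,…,ε_a)` associated to a sign vector. -/
def sgnMatrix {a : ℕ} (K : Type*) [Field K] (ε : Fin a → ℤˣ) :
    Matrix (Fin a ⊕ Fin a) (Fin a ⊕ Fin a) K :=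
  Matrix.diagonal (Sum.elim (fun i => ((ε i : ℤ) : K)) (fun i => ((ε i : ℤ) : K)))

/-- The variety `U_a^{ξ}` of `2g`-tuples of symplectic matrices with
`∏ᵢ [Aᵢ : Bᵢ] = diag(d₁,…,d_a,d₁⁻¹,…,d_a⁻¹)`. -/
def USet (K : Type*) [Field K] (g a : ℕ) (d : Fin a → K) :
    Set ((Fin g → Matrix (Fin a ⊕ Fin a) (Fin a ⊕ Fin a) K) ×
      (Fin g → Matrix (Fin a ⊕ Fin a) (Fin a ⊕ Fin a) K)) :=
  {AB | (∀ i, IsSymplectic (AB.1 i)) ∧ (∀ i, IsSymplectic (AB.2 i)) ∧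
    (List.ofFn (fun i => AB.1 i * AB.2 i * (AB.1 i)⁻¹ * (AB.2 i)⁻¹)).prod =
      Matrix.diagonal (Sum.elim d fun j => (d j)⁻¹)}



/-- `ℤˣ → ZMod 2` as an additive hom. -/
def g0 : Additive ℤˣ →+ ZMod 2 where
  toFun u := if u.toMul = 1 then 0 else 1
  map_zero' := by simp
  map_add' a b := by
    rcases Int.units_eq_one_or a.toMul with ha | ha <;>
    rcases Int.units_eq_one_or b.toMul with hb | hb <;>
      simp [toMul_add, ha, hb] <;> decide

lemma g0_inj : Function.Injective g0 := by
  intro a b hab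
  have h1 : (if a.toMul = 1 then (0 : ZMod 2) else 1)
      = (if b.toMul = 1 then 0 else 1) := hab
  apply Additive.toMul.injective
  rcases Int.units_eq_one_or a.toMul with ha | ha <;>
    rcases Int.units_eq_one_or b.toMul with hb | hb <;>
    rw [ha, hb] at h1 ⊢ <;>
    first
      | rfl
      | exact absurd h1 (by decide)

lemma exists_classifier {n : ℕ} (H : Subgroup (Fin n → ℤˣ))
    (hHneg : (fun _ => -1 : Fin n → ℤˣ) ∈ H)
    (k : ℕ) (hHcard : Nat.card H = 2 ^ (k + 1)) :
    ∃ c : Fin n → Fin (2 ^ k),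
      ∀ s t, c s = c t ↔ ∀ ε ∈ H, (ε : Fin n → ℤˣ) s = ε t := by
  classical
  have hfin : Finite H := Nat.finite_of_card_ne_zero (by rw [hHcard]; positivity)
  letI : Module (ZMod 2) (Additive H) := AddCommGroup.zmodModule (by
    intro x
    apply Additive.toMul.injective
    rw [two_nsmul, toMul_add, toMul_zero]
    apply Subtype.ext
    funext s
    show ((x.toMul : Fin n → ℤˣ) s) * ((x.toMul : Fin n → ℤˣ) s) = 1
    rcases Int.units_eq_one_or ((x.toMul : Fin n → ℤˣ) s) with h | h <;> rw [h] <;> decide)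
  set V := Additive H
  -- the linear functional attached to a coordinate
  let lin : Fin n → (V →ₗ[ZMod 2] ZMod 2) := fun s =>
    AddMonoidHom.toZModLinearMap 2
      (g0.comp (MonoidHom.toAdditive ((Pi.evalMonoidHom (fun _ => ℤˣ) s).comp H.subtype)))
  have lin_apply : ∀ s (v : V), lin s v = g0 (Additive.ofMul ((v.toMul : Fin n → ℤˣ) s)) :=
    fun s v => rfl
  have key : ∀ s t, lin s = lin t ↔ ∀ ε ∈ H, (ε : Fin n → ℤˣ) s = ε t := by
    intro s t
    constructor
    · intro h ε hε
      have := congrFun (congrArg DFunLike.coe h) (Additive.ofMul (⟨ε, hε⟩ : H))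
      rw [lin_apply, lin_apply] at this
      simpa using g0_inj this
    · intro h
      ext v
      rw [lin_apply, lin_apply, h _ v.toMul.2]
  rcases Nat.eq_zero_or_pos n with hn | hn
  · subst hn
    exact ⟨Fin.elim0, fun s => s.elim0⟩
  -- counting
  let v0 : V := Additive.ofMul (⟨_, hHneg⟩ : H)
  have hv0 : ∀ s, lin s v0 = 1 := by
    intro s
    rw [lin_apply]
    show (if ((-1 : ℤˣ) = 1) then (0 : ZMod 2) else 1) = 1
    decide
  let s0 : Fin n := ⟨0, hn⟩
  let f0 := lin s0
  haveI : Finite V := hfin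
  haveI : Finite (V →ₗ[ZMod 2] ZMod 2) :=
    Finite.of_injective _ (DFunLike.coe_injective (F := V →ₗ[ZMod 2] ZMod 2))
  have hinj : Function.Injective
      (Sum.elim (fun f : Set.range lin => (f : V →ₗ[ZMod 2] ZMod 2))
        (fun f : Set.range lin => (f : V →ₗ[ZMod 2] ZMod 2) + f0)) := by
    have hval : ∀ f : Set.range lin, (f : V →ₗ[ZMod 2] ZMod 2) v0 = 1 := by
      rintro ⟨f, s, rfl⟩; exact hv0 s
    rintro (f | f) (f' | f') h <;> simp only [Sum.elim_inl, Sum.elim_inr] at h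
    · exact congrArg Sum.inl (Subtype.ext h)
    · exfalso
      have := congrArg (fun g => g v0) h
      simp only [LinearMap.add_apply, hval, hv0] at this
      exact one_ne_zero (by simpa [f0, hv0] using this : (1 : ZMod 2) = 0)
    · exfalso
      have := congrArg (fun g => g v0) h
      simp only [LinearMap.add_apply, hval, hv0] at this
      exact one_ne_zero (by simpa [f0, hv0] using this.symm : (1 : ZMod 2) = 0)
    · exact congrArg Sum.inr (Subtype.ext (by simpa using h))
  -- card of dual
  haveI : Module.Finite (ZMod 2) V := Module.Finite.of_finite
  have hdualcard : Nat.card (V →ₗ[ZMod 2] ZMod 2) = 2 ^ (k + 1) := by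
    letI := Fintype.ofFinite V
    letI := Fintype.ofFinite (V →ₗ[ZMod 2] ZMod 2)
    rw [Nat.card_eq_fintype_card]
    have h1 : Fintype.card (V →ₗ[ZMod 2] ZMod 2)
        = Fintype.card (ZMod 2) ^ Module.finrank (ZMod 2) (Module.Dual (ZMod 2) V) :=
      Module.card_eq_pow_finrank
    rw [h1, Subspace.dual_finrank_eq]
    have h2 : Fintype.card V = Fintype.card (ZMod 2) ^ Module.finrank (ZMod 2) V :=
      Module.card_eq_pow_finrank
    have h3 : Fintype.card V = 2 ^ (k + 1) := by
      rw [← Nat.card_eq_fintype_card]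
      rw [← hHcard]
      exact Nat.card_congr (Equiv.refl _)
    rw [ZMod.card] at h2 ⊢
    omega
  have hrange : Nat.card (Set.range lin) ≤ 2 ^ k := by
    have := Nat.card_le_card_of_injective _ hinj
    rw [Nat.card_sum, hdualcard] at this
    omega
  -- build c
  letI := Fintype.ofFinite (Set.range lin)
  let e1 := Fintype.equivFin (Set.range lin)
  have hcard : Fintype.card (Set.range lin) ≤ 2 ^ k := by
    rwa [← Nat.card_eq_fintype_card]
  let c : Fin n → Fin (2 ^ k) := fun s => Fin.castLE hcard (e1 ⟨lin s, Set.mem_range_self s⟩)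
  refine ⟨c, fun s t => ?_⟩
  rw [← key]
  constructor
  · intro h
    have := e1.injective (Fin.castLE_injective hcard h)
    exact congrArg Subtype.val this
  · intro h
    simp only [c, h]

section blocks

variable {K : Type*} [Field K] {n N : ℕ}

/-- The fiber of the classifier `c` over `i`, as a `Finset`. -/
abbrev Pc (c : Fin n → Fin N) (i : Fin N) : Finset (Fin n) :=
  Finset.univ.filter (fun s => c s = i)

/-- The type of families of block matrices. -/
abbrev BlkMat (c : Fin n → Fin N) (K : Type*) [Field K] :=
  ∀ i : Fin N, Matrix (Fin ((Pc c i).card) ⊕ Fin ((Pc c i).card))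
    (Fin ((Pc c i).card) ⊕ Fin ((Pc c i).card)) K

/-- The increasing enumeration of the fiber. -/
def embc (c : Fin n → Fin N) (i : Fin N) : Fin ((Pc c i).card) → Fin n :=
  fun u => (Pc c i).orderEmbOfFin rfl u

lemma c_embc (c : Fin n → Fin N) (i : Fin N) (u : Fin ((Pc c i).card)) :
    c (embc c i u) = i := by
  have h := Finset.orderEmbOfFin_mem (Pc c i) rfl u
  exact (Finset.mem_filter.mp h).2

lemma embc_inj (c : Fin n → Fin N) (i : Fin N) : Function.Injective (embc c i) :=
  fun _ _ h => ((Pc c i).orderEmbOfFin rfl).injective h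

/-- The doubled embedding on `Fin a ⊕ Fin a`. -/
def iotac (c : Fin n → Fin N) (i : Fin N) :
    (Fin ((Pc c i).card) ⊕ Fin ((Pc c i).card)) → (Fin n ⊕ Fin n) :=
  Sum.map (embc c i) (embc c i)

lemma iotac_inj (c : Fin n → Fin N) (i : Fin N) : Function.Injective (iotac c i) :=
  Function.Injective.sumMap (embc_inj c i) (embc_inj c i)

/-- The class of an index in `Fin n ⊕ Fin n`. -/
def classOf (c : Fin n → Fin N) : Fin n ⊕ Fin n → Fin N := Sum.elim c c

lemma classOf_iotac (c : Fin n → Fin N) (i : Fin N)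
    (x : Fin ((Pc c i).card) ⊕ Fin ((Pc c i).card)) :
    classOf c (iotac c i x) = i := by
  cases x <;> simp [classOf, iotac, c_embc]

/-- The reindexing equivalence between the sigma type of the blocks and `Fin n ⊕ Fin n`. -/
noncomputable def Ec (c : Fin n → Fin N) :
    (Σ i : Fin N, (Fin ((Pc c i).card) ⊕ Fin ((Pc c i).card))) ≃ (Fin n ⊕ Fin n) :=
  Equiv.ofBijective (fun p => iotac c p.1 p.2) (by
    constructor
    · rintro ⟨i, x⟩ ⟨j, y⟩ h
      have h' : iotac c i x = iotac c j y := h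
      have hij : i = j := by
        rw [← classOf_iotac c i x, ← classOf_iotac c j y, h']
      subst hij
      have hxy := iotac_inj c i h'
      rw [hxy]
    · intro z
      rcases z with s | s
      · have hs : s ∈ Pc c (c s) := by simp [Pc]
        have : s ∈ Set.range ((Pc c (c s)).orderEmbOfFin rfl) := by
          rw [Finset.range_orderEmbOfFin]; exact_mod_cast hs
        obtain ⟨u, hu⟩ := this
        exact ⟨⟨c s, Sum.inl u⟩, by simp [iotac, embc, hu]⟩
      · have hs : s ∈ Pc c (c s) := by simp [Pc]
        have : s ∈ Set.range ((Pc c (c s)).orderEmbOfFin rfl) := by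
          rw [Finset.range_orderEmbOfFin]; exact_mod_cast hs
        obtain ⟨u, hu⟩ := this
        exact ⟨⟨c s, Sum.inr u⟩, by simp [iotac, embc, hu]⟩)

lemma Ec_apply (c : Fin n → Fin N) (i : Fin N) (x) :
    Ec c ⟨i, x⟩ = iotac c i x := rfl

lemma Ec_symm_iotac (c : Fin n → Fin N) (i : Fin N) (x) :
    (Ec c).symm (iotac c i x) = ⟨i, x⟩ := by
  rw [← Ec_apply, Equiv.symm_apply_apply]

/-- Assembling a family of block matrices into a block-diagonal matrix on `Fin n ⊕ Fin n`. -/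
noncomputable def Dm (c : Fin n → Fin N) (M : BlkMat c K) :
    Matrix (Fin n ⊕ Fin n) (Fin n ⊕ Fin n) K :=
  (blockDiagonal' M).submatrix (Ec c).symm (Ec c).symm

/-- Extracting the blocks of a matrix. -/
noncomputable def blkc (c : Fin n → Fin N)
    (A : Matrix (Fin n ⊕ Fin n) (Fin n ⊕ Fin n) K) :
    BlkMat c K :=
  fun i => A.submatrix (fun u => iotac c i u) (fun u => iotac c i u)

lemma blkc_Dm (c : Fin n → Fin N) (M : BlkMat c K) (i : Fin N) : blkc c (Dm c M) i = M i := by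
  ext u v
  show blockDiagonal' M ((Ec c).symm (iotac c i u)) ((Ec c).symm (iotac c i v)) = M i u v
  rw [Ec_symm_iotac, Ec_symm_iotac]
  exact blockDiagonal'_apply_eq M i u v

/-- A matrix is block diagonal w.r.t. `c`. -/
def IsBDc (c : Fin n → Fin N) (A : Matrix (Fin n ⊕ Fin n) (Fin n ⊕ Fin n) K) : Prop :=
  ∀ x y : Fin n ⊕ Fin n, classOf c x ≠ classOf c y → A x y = 0

lemma Dm_blkc (c : Fin n → Fin N) (A : Matrix (Fin n ⊕ Fin n) (Fin n ⊕ Fin n) K)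
    (h : IsBDc c A) : Dm c (blkc c A) = A := by
  ext x y
  obtain ⟨⟨i, u⟩, rfl⟩ := (Ec c).surjective x
  obtain ⟨⟨j, v⟩, rfl⟩ := (Ec c).surjective y
  show blockDiagonal' (blkc c A) ((Ec c).symm (Ec c ⟨i, u⟩)) ((Ec c).symm (Ec c ⟨j, v⟩)) = _
  rw [Equiv.symm_apply_apply, Equiv.symm_apply_apply]
  by_cases hij : i = j
  · subst hij
    rw [blockDiagonal'_apply_eq]
    rfl
  · rw [blockDiagonal'_apply_ne _ _ _ hij]
    refine (h _ _ ?_).symm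
    rw [Ec_apply, Ec_apply, classOf_iotac, classOf_iotac]
    exact hij

lemma isBDc_Dm (c : Fin n → Fin N) (M : BlkMat c K) : IsBDc c (Dm c M) := by
  intro x y hxy
  obtain ⟨⟨i, u⟩, rfl⟩ := (Ec c).surjective x
  obtain ⟨⟨j, v⟩, rfl⟩ := (Ec c).surjective y
  show blockDiagonal' M ((Ec c).symm (Ec c ⟨i, u⟩)) ((Ec c).symm (Ec c ⟨j, v⟩)) = 0
  rw [Equiv.symm_apply_apply, Equiv.symm_apply_apply]
  apply blockDiagonal'_apply_ne
  intro hij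
  apply hxy
  rw [Ec_apply, Ec_apply, classOf_iotac, classOf_iotac, hij]

lemma Dm_inj (c : Fin n → Fin N) :
    Function.Injective (fun M : BlkMat c K => Dm c M) := by
  intro M M' h
  have h' : Dm c M = Dm c M' := h
  funext i
  rw [← blkc_Dm c M i, ← blkc_Dm c M' i, h']

lemma Dm_mul (c : Fin n → Fin N) (M M' : BlkMat c K) :
    Dm c M * Dm c M' = Dm c (fun i => M i * M' i) := by
  unfold Dm
  rw [submatrix_mul_equiv (blockDiagonal' M) (blockDiagonal' M') _ (Ec c).symm _,
    ← blockDiagonal'_mul]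

lemma Dm_one (c : Fin n → Fin N) : Dm c (fun _ => (1 : Matrix _ _ K)) = 1 := by
  unfold Dm
  rw [show (fun i : Fin N => (1 : Matrix (Fin ((Pc c i).card) ⊕ Fin ((Pc c i).card))
      (Fin ((Pc c i).card) ⊕ Fin ((Pc c i).card)) K)) = 1 from rfl, blockDiagonal'_one]
  exact submatrix_one_equiv (Ec c).symm

lemma Dm_transpose (c : Fin n → Fin N) (M : BlkMat c K) :
    (Dm c M)ᵀ = Dm c (fun i => (M i)ᵀ) := by
  unfold Dm
  rw [transpose_submatrix, ← blockDiagonal'_transpose]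

end blocks

section blocks2

variable {K : Type*} [Field K] {n N : ℕ}

lemma J_isBDc (c : Fin n → Fin N) : IsBDc c (sympJ n K) := by
  rintro (s | s) (t | t) hc <;>
    simp only [classOf, Sum.elim_inl, Sum.elim_inr] at hc <;>
    have hst : s ≠ t := fun h => hc (by rw [h])
  · simp [sympJ]
  · simp [sympJ, one_apply, hst]
  · simp [sympJ, one_apply, hst]
  · simp [sympJ]

lemma blkc_J (c : Fin n → Fin N) (i : Fin N) :
    blkc c (sympJ n K) i = sympJ ((Pc c i).card) K := by
  ext u v
  rcases u with u | u <;> rcases v with v | v <;>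
    simp only [blkc, submatrix_apply, iotac, Sum.map_inl, Sum.map_inr, sympJ,
      fromBlocks_apply₁₁, fromBlocks_apply₁₂, fromBlocks_apply₂₁, fromBlocks_apply₂₂,
      Matrix.zero_apply, Matrix.neg_apply, one_apply]
  · congr 1
    exact propext ⟨fun h => embc_inj c i h, fun h => by rw [h]⟩
  · congr 2
    exact propext ⟨fun h => embc_inj c i h, fun h => by rw [h]⟩

lemma J_eq_Dm (c : Fin n → Fin N) :
    sympJ n K = Dm c (fun i => sympJ ((Pc c i).card) K) := by
  rw [← Dm_blkc c (sympJ n K) (J_isBDc c)]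
  exact congrArg (Dm c) (funext (blkc_J c))

lemma diag_isBDc (c : Fin n → Fin N) (d : Fin n ⊕ Fin n → K) :
    IsBDc c (Matrix.diagonal d) := by
  intro x y hxy
  exact Matrix.diagonal_apply_ne d (fun h => hxy (by rw [h]))

lemma blkc_diag (c : Fin n → Fin N) (d : Fin n ⊕ Fin n → K) (i : Fin N) :
    blkc c (Matrix.diagonal d) i = Matrix.diagonal (fun u => d (iotac c i u)) := by
  ext u v
  by_cases huv : u = v
  · subst huv
    simp [blkc, Matrix.diagonal_apply_eq]
  · rw [Matrix.diagonal_apply_ne _ huv]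
    exact Matrix.diagonal_apply_ne d (fun h => huv (iotac_inj c i h))

lemma diag_eq_Dm (c : Fin n → Fin N) (d : Fin n ⊕ Fin n → K) :
    Matrix.diagonal d = Dm c (fun i => Matrix.diagonal (fun u => d (iotac c i u))) := by
  rw [← Dm_blkc c (Matrix.diagonal d) (diag_isBDc c d)]
  exact congrArg (Dm c) (funext (blkc_diag c d))

/-- A block-diagonal matrix commutes with any diagonal matrix constant on blocks. -/
lemma Dm_comm_diag (c : Fin n → Fin N) (M : BlkMat c K) (d : Fin n ⊕ Fin n → K)
    (hd : ∀ i x y, d (iotac c i x) = d (iotac c i y)) :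
    Dm c M * Matrix.diagonal d = Matrix.diagonal d * Dm c M := by
  rw [diag_eq_Dm c d, Dm_mul, Dm_mul]
  refine congrArg (Dm c) (funext fun i => ?_)
  ext u v
  rw [Matrix.mul_diagonal, Matrix.diagonal_mul, hd i v u, mul_comm]

lemma entry_zero_of_comm_diag {A : Matrix (Fin n ⊕ Fin n) (Fin n ⊕ Fin n) K}
    {d : Fin n ⊕ Fin n → K} (hA : A * Matrix.diagonal d = Matrix.diagonal d * A)
    {x y : Fin n ⊕ Fin n} (hxy : d x ≠ d y) : A x y = 0 := by
  have h := congrFun (congrFun hA x) y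
  rw [Matrix.mul_diagonal, Matrix.diagonal_mul] at h
  have h2 : A x y * (d y - d x) = 0 := by linear_combination h
  rcases mul_eq_zero.mp h2 with h3 | h3
  · exact h3
  · exact absurd (sub_eq_zero.mp h3).symm hxy

end blocks2

section blocks3

variable {K : Type*} [Field K] {n N : ℕ}

lemma J_mul_J (a : ℕ) : sympJ a K * sympJ a K = -1 := by
  simp only [sympJ, fromBlocks_multiply]
  simp [← fromBlocks_one, fromBlocks_neg]

lemma symp_left_inv {a : ℕ} {A : Matrix (Fin a ⊕ Fin a) (Fin a ⊕ Fin a) K}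
    (hA : IsSymplectic A) : (-(sympJ a K) * Aᵀ * sympJ a K) * A = 1 := by
  have h1 : (-(sympJ a K)) * (Aᵀ * sympJ a K * A) = 1 := by
    rw [hA, neg_mul, J_mul_J, neg_neg]
  calc (-(sympJ a K) * Aᵀ * sympJ a K) * A
      = (-(sympJ a K)) * (Aᵀ * sympJ a K * A) := by
        rw [Matrix.mul_assoc, Matrix.mul_assoc, Matrix.mul_assoc]
    _ = 1 := h1

lemma symp_right_inv {a : ℕ} {A : Matrix (Fin a ⊕ Fin a) (Fin a ⊕ Fin a) K}
    (hA : IsSymplectic A) : A * (-(sympJ a K) * Aᵀ * sympJ a K) = 1 :=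
  mul_eq_one_comm.mpr (symp_left_inv hA)

lemma symp_mul_inv {a : ℕ} {A : Matrix (Fin a ⊕ Fin a) (Fin a ⊕ Fin a) K}
    (hA : IsSymplectic A) : A * A⁻¹ = 1 := by
  rw [Matrix.inv_eq_right_inv (symp_right_inv hA)]
  exact symp_right_inv hA

lemma isSymp_Dm_iff (c : Fin n → Fin N) (M : BlkMat c K) :
    IsSymplectic (Dm c M) ↔ ∀ i, IsSymplectic (M i) := by
  unfold IsSymplectic
  rw [Dm_transpose, J_eq_Dm c, Dm_mul, Dm_mul]
  constructor
  · intro h i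
    exact congrFun (Dm_inj c h) i
  · intro h
    exact congrArg (Dm c) (funext h)

lemma Dm_inv (c : Fin n → Fin N) (M : BlkMat c K) (hM : ∀ i, IsSymplectic (M i)) :
    (Dm c M)⁻¹ = Dm c (fun i => (M i)⁻¹) := by
  apply Matrix.inv_eq_right_inv
  rw [Dm_mul]
  rw [show (fun i => M i * (M i)⁻¹) = (fun _ => (1 : Matrix _ _ K)) from
    funext fun i => symp_mul_inv (hM i)]
  exact Dm_one c

/-- `Dm` as a monoid hom. -/
noncomputable def DmHom (c : Fin n → Fin N) :
    (BlkMat c K) →* Matrix (Fin n ⊕ Fin n) (Fin n ⊕ Fin n) K where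
  toFun := Dm c
  map_one' := Dm_one c
  map_mul' M M' := (Dm_mul c M M').symm

lemma Dm_listprod (c : Fin n → Fin N) {g : ℕ} (f : Fin g → BlkMat c K) :
    (List.ofFn (fun t => Dm c (f t))).prod = Dm c ((List.ofFn f).prod) := by
  have h1 : List.ofFn (fun t => Dm c (f t)) = (List.ofFn f).map (DmHom c) := by
    rw [List.map_ofFn]
    rfl
  rw [h1, List.prod_hom]
  rfl

lemma pi_listprod (c : Fin n → Fin N) {g : ℕ} (f : Fin g → BlkMat c K) (i : Fin N) :
    ((List.ofFn f).prod) i = (List.ofFn (fun t => f t i)).prod := by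
  have h1 : List.ofFn (fun t => f t i) = (List.ofFn f).map (Pi.evalMonoidHom _ i) := by
    rw [List.map_ofFn]
    rfl
  rw [h1, List.prod_hom]
  rfl

end blocks3

section main

variable {K : Type*} [Field K] {n N : ℕ}

lemma cast_units_ne (h2 : (2 : K) ≠ 0) {a b : ℤˣ} (hab : a ≠ b) :
    ((a : ℤ) : K) ≠ ((b : ℤ) : K) := by
  rcases Int.units_eq_one_or a with ha | ha <;> rcases Int.units_eq_one_or b with hb | hb <;>
    subst ha <;> subst hb
  · exact absurd rfl hab
  · intro h; push_cast at h; exact h2 (by linear_combination h)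
  · intro h; push_cast at h; exact h2 (by linear_combination -h)
  · exact absurd rfl hab

/-- The coordinate in `Fin n` of an index. -/
def coordOf {n : ℕ} : Fin n ⊕ Fin n → Fin n := Sum.elim id id

lemma sgnMatrix_eq_diag (ε : Fin n → ℤˣ) :
    sgnMatrix K ε = Matrix.diagonal (fun x => ((ε (coordOf x) : ℤ) : K)) := by
  unfold sgnMatrix
  congr 1
  funext x
  cases x <;> rfl

lemma classOf_eq (c : Fin n → Fin N) (x : Fin n ⊕ Fin n) :
    classOf c x = c (coordOf x) := by cases x <;> rfl

lemma coordOf_iotac (c : Fin n → Fin N) (i : Fin N) (x) :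
    coordOf (iotac c i x) = embc c i (Sum.elim id id x) := by cases x <;> rfl

variable (H : Subgroup (Fin n → ℤˣ))

/-- block-diagonality from commutation with all sign matrices of `H`. -/
lemma bd_of_comm_sgn (h2 : (2 : K) ≠ 0) (c : Fin n → Fin N)
    (hc : ∀ s t, c s = c t ↔ ∀ ε ∈ H, (ε : Fin n → ℤˣ) s = ε t)
    (A : Matrix (Fin n ⊕ Fin n) (Fin n ⊕ Fin n) K)
    (hA : ∀ ε ∈ H, A * sgnMatrix K ε = sgnMatrix K ε * A) : IsBDc c A := by
  intro x y hxy
  rw [classOf_eq, classOf_eq] at hxy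
  have hne : ¬ ∀ ε ∈ H, (ε : Fin n → ℤˣ) (coordOf x) = ε (coordOf y) :=
    fun h => hxy ((hc _ _).mpr h)
  push_neg at hne
  obtain ⟨ε, hεH, hεne⟩ := hne
  have hcomm := hA ε hεH
  rw [sgnMatrix_eq_diag] at hcomm
  exact entry_zero_of_comm_diag hcomm (cast_units_ne h2 hεne)

/-- commutation with sign matrices for assembled block-diagonal matrices. -/
lemma comm_sgn_of_Dm (c : Fin n → Fin N)
    (hc : ∀ s t, c s = c t ↔ ∀ ε ∈ H, (ε : Fin n → ℤˣ) s = ε t)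
    (M : BlkMat c K) (ε : Fin n → ℤˣ) (hεH : ε ∈ H) :
    Dm c M * sgnMatrix K ε = sgnMatrix K ε * Dm c M := by
  rw [sgnMatrix_eq_diag]
  apply Dm_comm_diag
  intro i x y
  rw [coordOf_iotac, coordOf_iotac]
  have h1 : c (embc c i (Sum.elim id id x)) = c (embc c i (Sum.elim id id y)) := by
    rw [c_embc c i, c_embc c i]
  have := (hc _ _).mp h1 ε hεH
  rw [this]

/-- the key product computation. -/
lemma prod_blocks (c : Fin n → Fin N) {g : ℕ} (MA MB : Fin g → BlkMat c K)
    (hMA : ∀ t i, IsSymplectic (MA t i)) (hMB : ∀ t i, IsSymplectic (MB t i)) :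
    (List.ofFn (fun t => Dm c (MA t) * Dm c (MB t) * (Dm c (MA t))⁻¹ * (Dm c (MB t))⁻¹)).prod
      = Dm c (fun i =>
        (List.ofFn (fun t => MA t i * MB t i * (MA t i)⁻¹ * (MB t i)⁻¹)).prod) := by
  have hcomm : ∀ t, Dm c (MA t) * Dm c (MB t) * (Dm c (MA t))⁻¹ * (Dm c (MB t))⁻¹
      = Dm c (fun i => MA t i * MB t i * (MA t i)⁻¹ * (MB t i)⁻¹) := by
    intro t
    rw [Dm_inv c (MA t) (hMA t), Dm_inv c (MB t) (hMB t), Dm_mul, Dm_mul, Dm_mul]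
  rw [show (fun t => Dm c (MA t) * Dm c (MB t) * (Dm c (MA t))⁻¹ * (Dm c (MB t))⁻¹)
      = fun t => Dm c (fun i => MA t i * MB t i * (MA t i)⁻¹ * (MB t i)⁻¹) from funext hcomm]
  rw [Dm_listprod]
  exact congrArg (Dm c) (funext fun i =>
    pi_listprod c (fun t i => MA t i * MB t i * (MA t i)⁻¹ * (MB t i)⁻¹) i)

lemma main_equiv (h2 : (2 : K) ≠ 0) (dv : Fin n → K) {g : ℕ}
    (c : Fin n → Fin N)
    (hc : ∀ s t, c s = c t ↔ ∀ ε ∈ H, (ε : Fin n → ℤˣ) s = ε t) :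
    Nonempty
      ((({AB | (∀ ε ∈ H, ∀ i,
            AB.1 i * sgnMatrix K ε = sgnMatrix K ε * AB.1 i ∧
            AB.2 i * sgnMatrix K ε = sgnMatrix K ε * AB.2 i)} :
          Set ((Fin g → Matrix (Fin n ⊕ Fin n) (Fin n ⊕ Fin n) K) ×
            (Fin g → Matrix (Fin n ⊕ Fin n) (Fin n ⊕ Fin n) K))) ∩
        USet K g n dv : Set _) ≃
      ∀ i : Fin N,
        (USet K g ((Pc c i).card) (fun j => dv ((Pc c i).orderEmbOfFin rfl j)))) := by
  classical
  set db : ∀ i : Fin N, Fin ((Pc c i).card) → K :=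
    fun i j => dv ((Pc c i).orderEmbOfFin rfl j) with hdb
  have hblockdiag : ∀ i : Fin N,
      (fun u => (Sum.elim dv fun j => (dv j)⁻¹) (iotac c i u))
        = Sum.elim (db i) (fun j => (db i j)⁻¹) := by
    intro i
    funext u
    cases u <;> rfl
  -- forward well-definedness
  have hforward : ∀ AB : (Fin g → Matrix (Fin n ⊕ Fin n) (Fin n ⊕ Fin n) K) ×
      (Fin g → Matrix (Fin n ⊕ Fin n) (Fin n ⊕ Fin n) K),
      AB ∈ ({AB | (∀ ε ∈ H, ∀ i,
            AB.1 i * sgnMatrix K ε = sgnMatrix K ε * AB.1 i ∧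
            AB.2 i * sgnMatrix K ε = sgnMatrix K ε * AB.2 i)} ∩ USet K g n dv : Set _) →
      ∀ i, ((fun t => blkc c (AB.1 t) i, fun t => blkc c (AB.2 t) i) ∈
        USet K g ((Pc c i).card) (db i)) := by
    rintro ⟨A, B⟩ ⟨hcm, hsA0, hsB0, hprod0⟩ i
    have hsA : ∀ t, IsSymplectic (A t) := hsA0
    have hsB : ∀ t, IsSymplectic (B t) := hsB0
    have hprod : (List.ofFn (fun t => A t * B t * (A t)⁻¹ * (B t)⁻¹)).prod
        = Matrix.diagonal (Sum.elim dv fun j => (dv j)⁻¹) := hprod0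
    have hAeq : ∀ t, A t = Dm c (blkc c (A t)) := fun t =>
      (Dm_blkc c (A t) (bd_of_comm_sgn H h2 c hc (A t)
        (fun ε hε => (hcm ε hε t).1))).symm
    have hBeq : ∀ t, B t = Dm c (blkc c (B t)) := fun t =>
      (Dm_blkc c (B t) (bd_of_comm_sgn H h2 c hc (B t)
        (fun ε hε => (hcm ε hε t).2))).symm
    have hsA' : ∀ t i, IsSymplectic (blkc c (A t) i) := by
      intro t i
      have h3 : IsSymplectic (A t) := hsA t
      rw [hAeq t] at h3
      exact (isSymp_Dm_iff c _).mp h3 i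
    have hsB' : ∀ t i, IsSymplectic (blkc c (B t) i) := by
      intro t i
      have h3 : IsSymplectic (B t) := hsB t
      rw [hBeq t] at h3
      exact (isSymp_Dm_iff c _).mp h3 i
    refine ⟨fun t => hsA' t i, fun t => hsB' t i, ?_⟩
    have hprod2 : (List.ofFn (fun t => Dm c (blkc c (A t)) * Dm c (blkc c (B t)) *
        (Dm c (blkc c (A t)))⁻¹ * (Dm c (blkc c (B t)))⁻¹)).prod
        = Matrix.diagonal (Sum.elim dv fun j => (dv j)⁻¹) := by
      rw [show (fun t => Dm c (blkc c (A t)) * Dm c (blkc c (B t)) *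
          (Dm c (blkc c (A t)))⁻¹ * (Dm c (blkc c (B t)))⁻¹)
          = (fun t => A t * B t * (A t)⁻¹ * (B t)⁻¹) from
        funext fun t => by rw [← hAeq t, ← hBeq t]]
      exact hprod
    have h5 := prod_blocks c (fun t => blkc c (A t)) (fun t => blkc c (B t)) hsA' hsB'
    have h6 := h5.symm.trans hprod2
    rw [diag_eq_Dm c (Sum.elim dv fun j => (dv j)⁻¹)] at h6
    have h7 : (List.ofFn (fun t => blkc c (A t) i * blkc c (B t) i *
        (blkc c (A t) i)⁻¹ * (blkc c (B t) i)⁻¹)).prod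
        = Matrix.diagonal (fun u => (Sum.elim dv fun j => (dv j)⁻¹) (iotac c i u)) :=
      congrFun (Dm_inj c h6) i
    rw [hblockdiag i] at h7
    exact h7
  -- backward well-definedness
  have hback : ∀ y : (∀ i : Fin N, (USet K g ((Pc c i).card) (db i))),
      ((fun t => Dm c (fun i => (y i).1.1 t), fun t => Dm c (fun i => (y i).1.2 t)) ∈
        ({AB | (∀ ε ∈ H, ∀ i,
            AB.1 i * sgnMatrix K ε = sgnMatrix K ε * AB.1 i ∧
            AB.2 i * sgnMatrix K ε = sgnMatrix K ε * AB.2 i)} ∩ USet K g n dv : Set _)) := by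
    intro y
    have hsA' : ∀ t i, IsSymplectic ((y i).1.1 t) := fun t i => (y i).2.1 t
    have hsB' : ∀ t i, IsSymplectic ((y i).1.2 t) := fun t i => (y i).2.2.1 t
    refine ⟨fun ε hε t => ⟨comm_sgn_of_Dm H c hc _ ε hε, comm_sgn_of_Dm H c hc _ ε hε⟩,
      fun t => (isSymp_Dm_iff c _).mpr (fun i => hsA' t i),
      fun t => (isSymp_Dm_iff c _).mpr (fun i => hsB' t i), ?_⟩
    show (List.ofFn (fun t => Dm c (fun i => (y i).1.1 t) * Dm c (fun i => (y i).1.2 t) *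
        (Dm c (fun i => (y i).1.1 t))⁻¹ * (Dm c (fun i => (y i).1.2 t))⁻¹)).prod
      = Matrix.diagonal (Sum.elim dv fun j => (dv j)⁻¹)
    have h5 := prod_blocks c (fun t i => (y i).1.1 t) (fun t i => (y i).1.2 t)
      (fun t i => hsA' t i) (fun t i => hsB' t i)
    rw [h5, diag_eq_Dm c (Sum.elim dv fun j => (dv j)⁻¹)]
    refine congrArg (Dm c) (funext fun i => ?_)
    show (List.ofFn (fun t => (y i).1.1 t * (y i).1.2 t *
        ((y i).1.1 t)⁻¹ * ((y i).1.2 t)⁻¹)).prod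
      = Matrix.diagonal (fun u => (Sum.elim dv fun j => (dv j)⁻¹) (iotac c i u))
    rw [hblockdiag i]
    exact (y i).2.2.2
  refine ⟨⟨fun x => fun i => ⟨(fun t => blkc c (x.1.1 t) i, fun t => blkc c (x.1.2 t) i),
      hforward x.1 x.2 i⟩,
    fun y => ⟨(fun t => Dm c (fun i => (y i).1.1 t), fun t => Dm c (fun i => (y i).1.2 t)),
      hback y⟩, ?_, ?_⟩⟩
  · -- left inverse
    rintro ⟨⟨A, B⟩, hx⟩
    obtain ⟨hcm, hsA, hsB, hprod⟩ := hx
    apply Subtype.ext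
    show (fun t => Dm c (fun i => blkc c (A t) i), fun t => Dm c (fun i => blkc c (B t) i))
      = (A, B)
    have h1 : (fun t => Dm c (fun i => blkc c (A t) i)) = A := by
      funext t
      exact Dm_blkc c (A t) (bd_of_comm_sgn H h2 c hc (A t) (fun ε hε => (hcm ε hε t).1))
    have h2' : (fun t => Dm c (fun i => blkc c (B t) i)) = B := by
      funext t
      exact Dm_blkc c (B t) (bd_of_comm_sgn H h2 c hc (B t) (fun ε hε => (hcm ε hε t).2))
    rw [h1, h2']
  · -- right inverse
    intro y
    funext i
    apply Subtype.ext
    show (fun t => blkc c (Dm c (fun i' => (y i').1.1 t)) i,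
      fun t => blkc c (Dm c (fun i' => (y i').1.2 t)) i) = _
    have h1 : (fun t => blkc c (Dm c (fun i' => (y i').1.1 t)) i) = fun t => (y i).1.1 t := by
      funext t
      exact blkc_Dm c (fun i' => (y i').1.1 t) i
    have h2' : (fun t => blkc c (Dm c (fun i' => (y i').1.2 t)) i) = fun t => (y i).1.2 t := by
      funext t
      exact blkc_Dm c (fun i' => (y i').1.2 t) i
    rw [h1, h2']

end main

theorem statement2 {K : Type*} [Field K] [IsAlgClosed K] (h2 : (2 : K) ≠ 0)
    {m : ℕ} {φ : K} (hφ : IsPrimitiveRoot φ m)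
    {n : ℕ} (mm : Fin n → ℕ) (hgen : Generic φ mm)
    {g : ℕ} (hg : 1 ≤ g)
    (H : Subgroup (Fin n → ℤˣ)) (hHneg : (fun _ => -1 : Fin n → ℤˣ) ∈ H)
    (k : ℕ) (hHcard : Nat.card H = 2 ^ (k + 1)) :
    ∃ Pcal : Fin (2 ^ k) → Finset (Fin n),
      (∀ i j, i ≠ j → Disjoint (Pcal i) (Pcal j)) ∧
      (∀ s : Fin n, ∃ i, s ∈ Pcal i) ∧
      Nonempty
        ((({AB | (∀ ε ∈ H, ∀ i,
              AB.1 i * sgnMatrix K ε = sgnMatrix K ε * AB.1 i ∧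
              AB.2 i * sgnMatrix K ε = sgnMatrix K ε * AB.2 i)} :
            Set ((Fin g → Matrix (Fin n ⊕ Fin n) (Fin n ⊕ Fin n) K) ×
              (Fin g → Matrix (Fin n ⊕ Fin n) (Fin n ⊕ Fin n) K))) ∩
          USet K g n (fun i => φ ^ mm i) : Set _) ≃
        ∀ i : Fin (2 ^ k),
          (USet K g (Pcal i).card (fun j => φ ^ mm ((Pcal i).orderEmbOfFin rfl j)))) := by
  obtain ⟨c, hc⟩ := exists_classifier H hHneg k hHcard
  refine ⟨fun i => Pc c i, ?_, ?_, ?_⟩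
  · intro i j hij
    rw [Finset.disjoint_left]
    intro a ha hb
    rw [Finset.mem_filter] at ha hb
    exact hij (ha.2 ▸ hb.2 ▸ rfl)
  · intro s
    exact ⟨c s, by simp [Pc]⟩
  · exact main_equiv H h2 (fun i => φ ^ mm i) c hc
end

section
/- For every k-tuple (Z₁,…,Z_k) of vectors in {1,−1}^n there exists a permutation Φ of {1,…,n} such that (Φ·Z₁,…,Φ·Z_k) is in nested block form. -/
/-- Nested block-size data for `k` levels over `{1,…,n}` (0-indexed levels `0,…,k-1`,
level `h` having `2^(h+1)` blocks): the two top blocks partition `n`, and each block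
splits into the two blocks below it. -/
def NestedData (k n : ℕ) (a : ℕ → ℕ → ℕ) : Prop :=
  a 0 0 + a 0 1 = n ∧
  ∀ h i, h + 1 < k → i < 2 ^ (h + 1) → a (h + 1) (2 * i) + a (h + 1) (2 * i + 1) = a h i

/-- The index of the consecutive interval (of lengths `a h 0, a h 1, …`) containing `s`. -/
def blockIdx (a : ℕ → ℕ → ℕ) (h s : ℕ) : ℕ :=
  Nat.findGreatest (fun i => ∑ j ∈ Finset.range i, a h j ≤ s) (2 ^ (h + 1) - 1)

/-- The nested block vector at level `h`: `1` on odd-indexed intervals (even 0-indexed),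
`-1` on even-indexed ones. -/
def blockVec (a : ℕ → ℕ → ℕ) (h n : ℕ) : Fin n → ℤˣ :=
  fun s => if blockIdx a h (s : ℕ) % 2 = 0 then 1 else -1

/-- The action of a permutation `σ` of `{1,…,n}` on a sign vector: `(σ·W)(s) = W(σ⁻¹ s)`. -/
def permAct {n : ℕ} (σ : Equiv.Perm (Fin n)) (W : Fin n → ℤˣ) : Fin n → ℤˣ :=
  fun s => W (σ⁻¹ s)

/-- A `k`-tuple of sign vectors is in nested block form if it is the tuple of
nested block vectors of some nested block-size data. -/
def InNestedBlockForm (k n : ℕ) (Z : Fin k → Fin n → ℤˣ) : Prop :=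
  ∃ a : ℕ → ℕ → ℕ, NestedData k n a ∧ ∀ h : Fin k, Z h = blockVec a (h : ℕ) n


/-- The code of a point at level `h`, built from its bits `b 0, …, b h`
(most significant first). -/
def lvlCode (b : ℕ → ℕ) : ℕ → ℕ
  | 0 => b 0
  | h + 1 => 2 * lvlCode b h + b (h + 1)

lemma lvlCode_lt (b : ℕ → ℕ) (hb : ∀ j, b j ≤ 1) (h : ℕ) : lvlCode b h < 2 ^ (h + 1) := by
  induction h with
  | zero => have := hb 0; simp only [lvlCode, pow_one]; omega
  | succ h ih =>
    have h1 := hb (h + 1)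
    have h2 : 2 ^ (h + 1 + 1) = 2 * 2 ^ (h + 1) := by ring
    rw [lvlCode]; omega

lemma lvlCode_div (b : ℕ → ℕ) (hb : ∀ j, b j ≤ 1) (h m : ℕ) :
    lvlCode b (h + m) / 2 ^ m = lvlCode b h := by
  induction m with
  | zero => simp
  | succ m ih =>
    have key : lvlCode b (h + (m + 1)) / 2 = lvlCode b (h + m) := by
      show (2 * lvlCode b (h + m) + b (h + m + 1)) / 2 = _
      have := hb (h + m + 1); omega
    have h2 : (2:ℕ) ^ (m + 1) = 2 * 2 ^ m := by ring
    rw [h2, ← Nat.div_div_eq_div_mul, key, ih]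

lemma lvlCode_mod (b : ℕ → ℕ) (hb : ∀ j, b j ≤ 1) (h : ℕ) : lvlCode b h % 2 = b h := by
  cases h with
  | zero => have := hb 0; simp only [lvlCode]; omega
  | succ h => have := hb (h + 1); rw [lvlCode]; omega

/-- Partial sums of fiber counts of a function equal counts of sub-level sets. -/
lemma sum_fiber_card {n : ℕ} (g : Fin n → ℕ) (i : ℕ) :
    ∑ j ∈ Finset.range i, (Finset.univ.filter (fun t => g t = j)).card
      = (Finset.univ.filter (fun t => g t < i)).card := by
  rw [Finset.card_eq_sum_card_fiberwise (f := g) (t := Finset.range i)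
      (fun x hx => Finset.mem_range.mpr (Finset.mem_filter.mp hx).2)]
  refine Finset.sum_congr rfl fun j hj => ?_
  congr 1
  ext t
  simp only [Finset.mem_filter, Finset.mem_univ, true_and]
  exact ⟨fun h => ⟨by rw [h]; exact Finset.mem_range.mp hj, h⟩, fun h => h.2⟩

lemma findGreatest_eq {n : ℕ} (g : Fin n → ℕ) (mono : Monotone g) (M : ℕ)
    (hbd : ∀ t, g t < M) (s : Fin n) :
    Nat.findGreatest
      (fun i => ∑ j ∈ Finset.range i, (Finset.univ.filter (fun t => g t = j)).card ≤ (s : ℕ))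
      (M - 1) = g s := by
  set P : ℕ → Prop := fun i =>
    ∑ j ∈ Finset.range i, (Finset.univ.filter (fun t => g t = j)).card ≤ (s : ℕ) with hP
  have hPs : P (g s) := by
    rw [hP]
    simp only [sum_fiber_card]
    calc (Finset.univ.filter (fun t => g t < g s)).card
        ≤ (Finset.Iio s).card := by
          apply Finset.card_le_card
          intro t ht
          simp only [Finset.mem_filter, Finset.mem_univ, true_and] at ht
          simp only [Finset.mem_Iio]
          by_contra hc
          exact absurd (mono (le_of_not_gt hc)) (not_le.mpr ht)
      _ = (s : ℕ) := Fin.card_Iio s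
  have hnot : ¬ P (g s + 1) := by
    rw [hP]
    simp only [sum_fiber_card, not_le]
    calc (s : ℕ) < (Finset.Iic s).card := by rw [Fin.card_Iic]; omega
      _ ≤ (Finset.univ.filter (fun t => g t < g s + 1)).card := by
          apply Finset.card_le_card
          intro t ht
          simp only [Finset.mem_Iic] at ht
          simp only [Finset.mem_filter, Finset.mem_univ, true_and]
          exact Nat.lt_succ_of_le (mono ht)
  have hle : g s ≤ M - 1 := by have := hbd s; omega
  rw [Nat.findGreatest_eq_iff]
  refine ⟨hle, fun _ => hPs, fun m hm _ hPm => hnot ?_⟩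
  show ∑ j ∈ Finset.range (g s + 1), (Finset.univ.filter (fun t => g t = j)).card ≤ (s : ℕ)
  exact le_trans (Finset.sum_le_sum_of_subset (Finset.range_subset_range.mpr hm)) hPm

theorem statement3 {k n : ℕ} (hk : 1 ≤ k) (Z : Fin k → Fin n → ℤˣ) :
    ∃ σ : Equiv.Perm (Fin n), InNestedBlockForm k n (fun h => permAct σ (Z h)) := by
  classical
  -- bits
  set b : Fin n → ℕ → ℕ := fun s j =>
    if hj : j < k then (if Z ⟨j, hj⟩ s = 1 then 0 else 1) else 0 with hbdef
  have hb1 : ∀ s j, b s j ≤ 1 := by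
    intro s j
    simp only [hbdef]
    split <;> [skip; exact Nat.zero_le 1]
    split <;> omega
  set c : Fin n → ℕ := fun s => lvlCode (b s) (k - 1) with hcdef
  set σ₀ : Equiv.Perm (Fin n) := Tuple.sort c with hσ₀
  have hmono : Monotone (c ∘ σ₀) := Tuple.monotone_sort c
  set a : ℕ → ℕ → ℕ := fun h i =>
    (Finset.univ.filter (fun t : Fin n => lvlCode (b (σ₀ t)) h = i)).card with hadef
  -- level codes of the sorted sequence are monotone
  have hdiv : ∀ (h : ℕ), h < k → ∀ t : Fin n, lvlCode (b t) h = c t / 2 ^ (k - 1 - h) := by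
    intro h hh t
    have := lvlCode_div (b t) (hb1 t) h (k - 1 - h)
    rw [show h + (k - 1 - h) = k - 1 from by omega] at this
    rw [hcdef]
    exact this.symm
  have hmonoLvl : ∀ (h : ℕ), h < k → Monotone (fun t => lvlCode (b (σ₀ t)) h) := by
    intro h hh t₁ t₂ hle
    simp only [hdiv h hh]
    exact Nat.div_le_div_right (hmono hle)
  refine ⟨σ₀⁻¹, a, ⟨?_, ?_⟩, ?_⟩
  · -- a 0 0 + a 0 1 = n
    have h01 : ∀ t : Fin n, lvlCode (b (σ₀ t)) 0 = 0 ∨ lvlCode (b (σ₀ t)) 0 = 1 := by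
      intro t; have := hb1 (σ₀ t) 0; simp only [lvlCode]; omega
    rw [hadef]
    simp only
    rw [← Finset.card_union_of_disjoint, ← Finset.filter_or]
    · rw [show (Finset.univ.filter fun t : Fin n =>
          lvlCode (b (σ₀ t)) 0 = 0 ∨ lvlCode (b (σ₀ t)) 0 = 1) = Finset.univ from ?_]
      · exact Finset.card_univ.trans (Fintype.card_fin n)
      · ext t; simpa using h01 t
    · rw [Finset.disjoint_filter]
      intro t _ h0; omega
  · -- nesting
    intro h i hh hi
    rw [hadef]
    simp only
    rw [← Finset.card_union_of_disjoint, ← Finset.filter_or]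
    · congr 1
      apply Finset.filter_congr
      intro t _
      have hb := hb1 (σ₀ t) (h + 1)
      show (lvlCode (b (σ₀ t)) (h+1) = 2*i ∨ lvlCode (b (σ₀ t)) (h+1) = 2*i+1)
        ↔ lvlCode (b (σ₀ t)) h = i
      rw [show lvlCode (b (σ₀ t)) (h+1) = 2 * lvlCode (b (σ₀ t)) h + b (σ₀ t) (h+1) from rfl]
      omega
    · rw [Finset.disjoint_filter]
      intro t _ h0; omega
  · -- block vectors
    intro h
    funext s
    show Z h (σ₀ s) = blockVec a (h : ℕ) n s
    have hidx : blockIdx a (h : ℕ) (s : ℕ) = lvlCode (b (σ₀ s)) (h : ℕ) := by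
      rw [blockIdx, hadef]
      exact findGreatest_eq _ (hmonoLvl h h.isLt) (2 ^ ((h : ℕ) + 1))
        (fun t => lvlCode_lt _ (hb1 (σ₀ t)) _) s
    rw [blockVec, hidx, lvlCode_mod _ (hb1 (σ₀ s))]
    rw [hbdef]
    simp only [h.isLt, dif_pos, Fin.eta]
    rcases Int.units_eq_one_or (Z h (σ₀ s)) with hz | hz <;> rw [hz] <;> simp
end

section
/- Let (Z₁,…,Z_k) be any k-tuple of vectors in {1,−1}^n and let λ, μ be permutations of {1,…,n} such that both (λ·Z₁,…,λ·Z_k) and (μ·Z₁,…,μ·Z_k) are in nested block form. Then λ·Z_h = μ·Z_h for every h = 1,…,k. In particular, the nested block-size data realizing a given k-tuple in nested block form after some permutation is uniquely determined by the tuple. -/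
-- auxiliary
def preSum (a : ℕ → ℕ → ℕ) (h i : ℕ) : ℕ := ∑ j ∈ Finset.range i, a h j

lemma preSum_mono (a : ℕ → ℕ → ℕ) (h : ℕ) : Monotone (preSum a h) := fun i j hij =>
  Finset.sum_le_sum_of_subset (Finset.range_subset_range.mpr hij)

lemma preSum_nested {k n : ℕ} {a : ℕ → ℕ → ℕ} (ha : NestedData k n a) {h : ℕ}
    (hh : h + 1 < k) : ∀ i ≤ 2 ^ (h + 1), preSum a (h + 1) (2 * i) = preSum a h i := by
  intro i
  induction i with
  | zero => simp [preSum]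
  | succ i ih =>
    intro hi
    have hi' : i < 2 ^ (h + 1) := by omega
    have e1 := ha.2 h i hh hi'
    have e2 := ih (le_of_lt hi')
    have e3 : 2 * (i + 1) = (2 * i + 1) + 1 := by ring
    unfold preSum at *
    rw [e3, Finset.sum_range_succ, Finset.sum_range_succ, Finset.sum_range_succ]
    omega

lemma preSum_total {k n : ℕ} {a : ℕ → ℕ → ℕ} (ha : NestedData k n a) :
    ∀ h < k, preSum a h (2 ^ (h + 1)) = n := by
  intro h
  induction h with
  | zero =>
    intro _
    have : preSum a 0 2 = a 0 0 + a 0 1 := by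
      unfold preSum
      rw [Finset.sum_range_succ, Finset.sum_range_succ]; simp
    simpa [this] using ha.1
  | succ h ih =>
    intro hk
    have h1 : h < k := by omega
    have e : (2:ℕ) ^ (h + 1 + 1) = 2 * 2 ^ (h + 1) := by ring
    rw [e, preSum_nested ha hk _ le_rfl, ih h1]

lemma blockIdx_le (a : ℕ → ℕ → ℕ) (h s : ℕ) : blockIdx a h s ≤ 2 ^ (h + 1) - 1 :=
  Nat.findGreatest_le _

lemma blockIdx_pre_le (a : ℕ → ℕ → ℕ) (h s : ℕ) : preSum a h (blockIdx a h s) ≤ s := by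
  have := Nat.findGreatest_spec (P := fun i => ∑ j ∈ Finset.range i, a h j ≤ s)
    (Nat.zero_le (2 ^ (h + 1) - 1)) (by simp)
  simpa [blockIdx, preSum] using this

lemma blockIdx_lt_pre {k n : ℕ} {a : ℕ → ℕ → ℕ} (ha : NestedData k n a) {h s : ℕ}
    (hh : h < k) (hs : s < n) : s < preSum a h (blockIdx a h s + 1) := by
  by_cases hcase : blockIdx a h s + 1 ≤ 2 ^ (h + 1) - 1
  · have := Nat.findGreatest_is_greatest (Nat.lt_succ_self (blockIdx a h s)) hcase
    simpa [blockIdx, preSum] using Nat.lt_of_not_le this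
  · have hle := blockIdx_le a h s
    have hpow : 1 ≤ (2:ℕ) ^ (h + 1) := Nat.one_le_two_pow
    have : blockIdx a h s + 1 = 2 ^ (h + 1) := by omega
    rw [this, preSum_total ha h hh]; exact hs

lemma blockIdx_eq {a : ℕ → ℕ → ℕ} {h s i : ℕ} (hi : i < 2 ^ (h + 1))
    (h1 : preSum a h i ≤ s) (h2 : s < preSum a h (i + 1)) : blockIdx a h s = i := by
  have hpow : 1 ≤ (2:ℕ) ^ (h + 1) := Nat.one_le_two_pow
  have hb : i ≤ 2 ^ (h + 1) - 1 := by omega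
  refine le_antisymm ?_ (Nat.le_findGreatest hb h1)
  by_contra hlt
  push_neg at hlt
  have hfg : preSum a h (blockIdx a h s) ≤ s := blockIdx_pre_le a h s
  have : preSum a h (i + 1) ≤ preSum a h (blockIdx a h s) := preSum_mono a h hlt
  omega

lemma blockIdx_succ {k n : ℕ} {a : ℕ → ℕ → ℕ} (ha : NestedData k n a) {h s : ℕ}
    (hh : h + 1 < k) (hs : s < n) : blockIdx a (h + 1) s / 2 = blockIdx a h s := by
  set i := blockIdx a h s with hi
  have hpow : 1 ≤ (2:ℕ) ^ (h + 1) := Nat.one_le_two_pow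
  have hilt : i < 2 ^ (h + 1) := by have := blockIdx_le a h s; omega
  have hpow2 : (2:ℕ) ^ (h + 1 + 1) = 2 * 2 ^ (h + 1) := by ring
  have h1 : preSum a (h + 1) (2 * i) ≤ s := by
    rw [preSum_nested ha hh i hilt.le]; exact blockIdx_pre_le a h s
  have h2 : s < preSum a (h + 1) (2 * i + 2) := by
    have : 2 * i + 2 = 2 * (i + 1) := by ring
    rw [this, preSum_nested ha hh (i + 1) hilt]
    exact blockIdx_lt_pre ha (by omega) hs
  by_cases hc : s < preSum a (h + 1) (2 * i + 1)
  · have := blockIdx_eq (a := a) (h := h + 1) (i := 2 * i) (by omega) h1 hc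
    omega
  · push_neg at hc
    have := blockIdx_eq (a := a) (h := h + 1) (i := 2 * i + 1) (by omega) hc h2
    omega

lemma blockVec_parity {a b : ℕ → ℕ → ℕ} {h1 h2 n : ℕ} {t u : Fin n}
    (he : blockVec a h1 n t = blockVec b h2 n u) :
    blockIdx a h1 (t : ℕ) % 2 = blockIdx b h2 (u : ℕ) % 2 := by
  unfold blockVec at he
  by_cases c1 : blockIdx a h1 (t : ℕ) % 2 = 0 <;> by_cases c2 : blockIdx b h2 (u : ℕ) % 2 = 0 <;>
    simp [c1, c2] at he ⊢ <;> omega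

lemma keyIdx {k n : ℕ} {a b : ℕ → ℕ → ℕ} (ha : NestedData k n a) (hb : NestedData k n b)
    (σ : Equiv.Perm (Fin n))
    (hsig : ∀ h : ℕ, h < k → ∀ s : Fin n, blockVec a h n (σ s) = blockVec b h n s) :
    ∀ h, h < k → ∀ s : Fin n, blockIdx a h ((σ s : Fin n) : ℕ) = blockIdx b h (s : ℕ) := by
  intro h
  induction h with
  | zero =>
    intro hk s
    have hpar := blockVec_parity (hsig 0 hk s)
    have ha1 : blockIdx a 0 ((σ s : Fin n) : ℕ) ≤ 1 := by
      have := blockIdx_le a 0 ((σ s : Fin n) : ℕ); norm_num at this; omega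
    have hb1 : blockIdx b 0 (s : ℕ) ≤ 1 := by
      have := blockIdx_le b 0 (s : ℕ); norm_num at this; omega
    omega
  | succ h ih =>
    intro hk s
    have hprev := ih (by omega) s
    have hdiv_a := blockIdx_succ ha hk (σ s).isLt
    have hdiv_b := blockIdx_succ hb hk s.isLt
    have hpar := blockVec_parity (hsig (h + 1) hk s)
    omega

lemma count_eq {k n : ℕ} {a : ℕ → ℕ → ℕ} (ha : NestedData k n a) {h i : ℕ}
    (hh : h < k) (hi : i < 2 ^ (h + 1)) :
    (Finset.univ.filter (fun s : Fin n => blockIdx a h (s : ℕ) = i)).card = a h i := by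
  have htot := preSum_total ha h hh
  have hle1 : preSum a h (i + 1) ≤ n := htot ▸ preSum_mono a h (by omega)
  have hkey : ∀ s : Fin n, blockIdx a h (s : ℕ) = i ↔
      (preSum a h i ≤ (s : ℕ) ∧ (s : ℕ) < preSum a h (i + 1)) := by
    intro s
    constructor
    · rintro rfl
      exact ⟨blockIdx_pre_le a h s, blockIdx_lt_pre ha hh s.isLt⟩
    · rintro ⟨h1, h2⟩
      exact blockIdx_eq hi h1 h2
  have hcard : (Finset.univ.filter (fun s : Fin n => blockIdx a h (s : ℕ) = i)).card
      = (Finset.Ico (preSum a h i) (preSum a h (i + 1))).card := by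
    refine Finset.card_bij (fun s _ => (s : ℕ)) ?_ ?_ ?_
    · intro s hs
      simp only [Finset.mem_filter, Finset.mem_univ, true_and] at hs
      simp only [Finset.mem_Ico]
      exact (hkey s).mp hs
    · intro s _ t _ hst
      exact Fin.ext hst
    · intro t ht
      simp only [Finset.mem_Ico] at ht
      have htn : t < n := lt_of_lt_of_le ht.2 hle1
      refine ⟨⟨t, htn⟩, ?_, rfl⟩
      simp only [Finset.mem_filter, Finset.mem_univ, true_and]
      exact (hkey ⟨t, htn⟩).mpr ht
  rw [hcard, Nat.card_Ico]
  unfold preSum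
  rw [Finset.sum_range_succ]
  omega

lemma findGreatest_congr (P Q : ℕ → Prop) [DecidablePred P] [DecidablePred Q]
    (b : ℕ) (h : ∀ m ≤ b, (P m ↔ Q m)) :
    Nat.findGreatest P b = Nat.findGreatest Q b := by
  induction b with
  | zero => rfl
  | succ b ih =>
    rw [Nat.findGreatest_succ, Nat.findGreatest_succ]
    by_cases hp : P (b + 1)
    · rw [if_pos hp, if_pos ((h _ le_rfl).mp hp)]
    · rw [if_neg hp, if_neg (fun hq => hp ((h _ le_rfl).mpr hq)),
        ih (fun m hm => h m (hm.trans (Nat.le_succ b)))]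

lemma blockVec_congr {a b : ℕ → ℕ → ℕ} {h n : ℕ} (hab : ∀ j < 2 ^ (h + 1), a h j = b h j) :
    blockVec a h n = blockVec b h n := by
  have hidx : ∀ s : ℕ, blockIdx a h s = blockIdx b h s := by
    intro s
    unfold blockIdx
    apply findGreatest_congr
    intro m hm
    have hpow : 1 ≤ (2:ℕ) ^ (h + 1) := Nat.one_le_two_pow
    have : ∑ j ∈ Finset.range m, a h j = ∑ j ∈ Finset.range m, b h j :=
      Finset.sum_congr rfl (fun j hj => hab j (by have := Finset.mem_range.mp hj; omega))
    rw [this]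
  funext s
  unfold blockVec
  rw [hidx]

theorem statement5 {k n : ℕ} (hk : 1 ≤ k) (Z : Fin k → Fin n → ℤˣ)
    (lam mu : Equiv.Perm (Fin n))
    (hlam : InNestedBlockForm k n (fun h => permAct lam (Z h)))
    (hmu : InNestedBlockForm k n (fun h => permAct mu (Z h))) :
    (∀ h : Fin k, permAct lam (Z h) = permAct mu (Z h)) ∧
    ∀ a b : ℕ → ℕ → ℕ, NestedData k n a → NestedData k n b →
      (∀ h : Fin k, permAct lam (Z h) = blockVec a (h : ℕ) n) →
      (∀ h : Fin k, permAct mu (Z h) = blockVec b (h : ℕ) n) →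
      ∀ h < k, ∀ i < 2 ^ (h + 1), a h i = b h i := by
  have main : ∀ a b : ℕ → ℕ → ℕ, NestedData k n a → NestedData k n b →
      (∀ h : Fin k, permAct lam (Z h) = blockVec a (h : ℕ) n) →
      (∀ h : Fin k, permAct mu (Z h) = blockVec b (h : ℕ) n) →
      ∀ h < k, ∀ i < 2 ^ (h + 1), a h i = b h i := by
    intro a b ha hb hZa hZb
    have hsig : ∀ h : ℕ, h < k → ∀ s : Fin n,
        blockVec a h n ((lam * mu⁻¹ : Equiv.Perm (Fin n)) s) = blockVec b h n s := by
      intro h hh s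
      have e1 := congrFun (hZa ⟨h, hh⟩) ((lam * mu⁻¹ : Equiv.Perm (Fin n)) s)
      have e2 := congrFun (hZb ⟨h, hh⟩) s
      have hl : ∀ x, lam⁻¹ (lam x) = x := fun x => lam.symm_apply_apply x
      simp only [permAct, Equiv.Perm.mul_apply, hl] at e1 e2
      rw [Equiv.Perm.mul_apply, ← e1, e2]
    have hidx := keyIdx ha hb (lam * mu⁻¹) hsig
    intro h hh i hi
    rw [← count_eq ha hh hi, ← count_eq hb hh hi]
    apply Finset.card_equiv (lam * mu⁻¹ : Equiv.Perm (Fin n)).symm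
    intro s
    simp only [Finset.mem_filter, Finset.mem_univ, true_and]
    have hi2 := hidx h hh ((lam * mu⁻¹ : Equiv.Perm (Fin n)).symm s)
    rw [Equiv.apply_symm_apply] at hi2
    rw [hi2]
  obtain ⟨a, ha, hZa⟩ := hlam
  obtain ⟨b, hb, hZb⟩ := hmu
  have hab := main a b ha hb hZa hZb
  refine ⟨?_, main⟩
  intro h
  exact (hZa h).trans ((blockVec_congr (fun j hj => hab (h : ℕ) h.isLt j hj)).trans (hZb h).symm)
end

section
/- Let (Z₁,…,Z_k) be an independent k-tuple of vectors in {1,−1}^n whose generated subgroup does not contain the constant vector −1, with associated block data {a^h_i}. Fix 1 ≤ j ≤ k and let {b^h_i} be the block data associated to the tuple (Z₁,…,Z_{j−1}, −Z_j, Z_{j+1},…,Z_k), where −Z_j denotes the pointwise negation of Z_j. Then for every h = 1,…,k there exists a permutation λ_h of {1,…,2^h} such that b^h_i = a^h_{λ_h(i)} for all i = 1,…,2^h. -/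
namespace Aux6

def sgn (b : Bool) : ℤˣ := if b then -1 else 1

lemma sgn_not (b : Bool) : sgn (!b) = - sgn b := by cases b <;> simp [sgn]

lemma sgn_inj {b b' : Bool} (h : sgn b = sgn b') : b = b' := by
  cases b <;> cases b' <;> simp_all [sgn]

lemma sum_double (f : ℕ → ℕ) (m : ℕ) :
    ∑ j ∈ Finset.range (2 * m), f j = ∑ i ∈ Finset.range m, (f (2 * i) + f (2 * i + 1)) := by
  induction m with
  | zero => simp
  | succ m ih =>
    rw [Nat.mul_succ, Finset.sum_range_succ, Finset.sum_range_succ, Finset.sum_range_succ, ← ih]; ring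

lemma S_mono (a : ℕ → ℕ → ℕ) (h : ℕ) {m m' : ℕ} (hm : m ≤ m') :
    ∑ j ∈ Finset.range m, a h j ≤ ∑ j ∈ Finset.range m', a h j :=
  Finset.sum_le_sum_of_subset (Finset.range_subset_range.mpr hm)

lemma S_double {k n : ℕ} {a : ℕ → ℕ → ℕ} (ha : NestedData k n a) {h : ℕ} (hh : h + 1 < k)
    {m : ℕ} (hm : m ≤ 2 ^ (h + 1)) :
    ∑ j ∈ Finset.range m, a h j = ∑ j ∈ Finset.range (2 * m), a (h + 1) j := by
  rw [sum_double]
  exact (Finset.sum_congr rfl fun i hi =>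
    ha.2 h i hh (lt_of_lt_of_le (Finset.mem_range.mp hi) hm)).symm

lemma total {k n : ℕ} {a : ℕ → ℕ → ℕ} (ha : NestedData k n a) :
    ∀ h, h < k → ∑ j ∈ Finset.range (2 ^ (h + 1)), a h j = n := by
  intro h
  induction h with
  | zero => intro _; simpa [Finset.sum_range_succ] using ha.1
  | succ h ih =>
    intro hh
    rw [show (2:ℕ) ^ (h + 1 + 1) = 2 * 2 ^ (h + 1) by ring,
      ← S_double ha hh le_rfl, ih (Nat.lt_of_succ_lt hh)]

lemma S_blockIdx_le (a : ℕ → ℕ → ℕ) (h s : ℕ) :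
    ∑ j ∈ Finset.range (blockIdx a h s), a h j ≤ s := by
  rcases Nat.eq_zero_or_pos (blockIdx a h s) with h0 | h0
  · rw [h0]; simp
  · exact Nat.findGreatest_of_ne_zero
      (P := fun i => ∑ j ∈ Finset.range i, a h j ≤ s) (n := 2 ^ (h + 1) - 1)
      (m := blockIdx a h s) rfl (by omega)

lemma le_blockIdx_iff {a : ℕ → ℕ → ℕ} {h m : ℕ} (s : ℕ) (hm : m ≤ 2 ^ (h + 1) - 1) :
    m ≤ blockIdx a h s ↔ ∑ j ∈ Finset.range m, a h j ≤ s :=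
  ⟨fun hle => le_trans (S_mono a h hle) (S_blockIdx_le a h s),
   fun hs => Nat.le_findGreatest (P := fun i => ∑ j ∈ Finset.range i, a h j ≤ s) hm hs⟩

lemma blockIdx_le (a : ℕ → ℕ → ℕ) (h s : ℕ) : blockIdx a h s ≤ 2 ^ (h + 1) - 1 :=
  Nat.findGreatest_le _

lemma card_ge_filter {k n : ℕ} {a : ℕ → ℕ → ℕ} (ha : NestedData k n a) {h : ℕ} (hh : h < k)
    {m : ℕ} (hm : m ≤ 2 ^ (h + 1)) :
    (Finset.univ.filter fun s : Fin n => m ≤ blockIdx a h (s : ℕ)).card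
      = n - ∑ j ∈ Finset.range m, a h j := by
  have htot := total ha h hh
  have hSn : ∑ j ∈ Finset.range m, a h j ≤ n := htot ▸ S_mono a h hm
  rcases Nat.lt_or_ge m (2 ^ (h + 1)) with hlt | hge
  · have hm' : m ≤ 2 ^ (h + 1) - 1 := by omega
    have : (Finset.univ.filter fun s : Fin n => m ≤ blockIdx a h (s : ℕ))
        = Finset.univ.filter fun s : Fin n => ∑ j ∈ Finset.range m, a h j ≤ (s : ℕ) := by
      apply Finset.filter_congr; intro s _; simpa using le_blockIdx_iff (s : ℕ) hm'
    rw [this, Finset.card_filter, Fin.sum_univ_eq_sum_range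
      (fun s => if ∑ j ∈ Finset.range m, a h j ≤ s then 1 else 0), ← Finset.card_filter]
    have : (Finset.range n).filter (fun s => ∑ j ∈ Finset.range m, a h j ≤ s)
        = Finset.Ico (∑ j ∈ Finset.range m, a h j) n := by
      ext x; simp only [Finset.mem_filter, Finset.mem_range, Finset.mem_Ico]; omega
    rw [this, Nat.card_Ico]
  · have hm2 : m = 2 ^ (h + 1) := le_antisymm hm hge
    have : (Finset.univ.filter fun s : Fin n => m ≤ blockIdx a h (s : ℕ)) = ∅ := by
      apply Finset.filter_false_of_mem
      intro s _
      have := blockIdx_le a h (s : ℕ)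
      have h1 : (1:ℕ) ≤ 2 ^ (h + 1) := Nat.one_le_two_pow
      omega
    rw [this, hm2, htot]
    simp

lemma card_blockIdx_eq {k n : ℕ} {a : ℕ → ℕ → ℕ} (ha : NestedData k n a) {h : ℕ} (hh : h < k)
    {i : ℕ} (hi : i < 2 ^ (h + 1)) :
    (Finset.univ.filter fun s : Fin n => blockIdx a h (s : ℕ) = i).card = a h i := by
  have htot := total ha h hh
  have hset : (Finset.univ.filter fun s : Fin n => blockIdx a h (s : ℕ) = i)
      = (Finset.univ.filter fun s : Fin n => i ≤ blockIdx a h (s : ℕ))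
        \ (Finset.univ.filter fun s : Fin n => i + 1 ≤ blockIdx a h (s : ℕ)) := by
    ext s; simp only [Finset.mem_sdiff, Finset.mem_filter, Finset.mem_univ, true_and]; omega
  have hsub : (Finset.univ.filter fun s : Fin n => i + 1 ≤ blockIdx a h (s : ℕ))
      ⊆ (Finset.univ.filter fun s : Fin n => i ≤ blockIdx a h (s : ℕ)) := by
    intro s hs
    simp only [Finset.mem_filter, Finset.mem_univ, true_and] at *
    omega
  rw [hset, Finset.card_sdiff_of_subset hsub, card_ge_filter ha hh (le_of_lt hi),
    card_ge_filter ha hh (show i + 1 ≤ 2 ^ (h + 1) by omega)]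
  have hSi : ∑ j ∈ Finset.range (i + 1), a h j = ∑ j ∈ Finset.range i, a h j + a h i :=
    Finset.sum_range_succ _ _
  have h1 : ∑ j ∈ Finset.range (i + 1), a h j ≤ n := htot ▸ S_mono a h hi
  omega

lemma blockIdx_nest {k n : ℕ} {a : ℕ → ℕ → ℕ} (ha : NestedData k n a) {h : ℕ} (hh : h + 1 < k)
    {s : ℕ} (hs : s < n) :
    blockIdx a h s = blockIdx a (h + 1) s / 2 := by
  set i1 := blockIdx a (h + 1) s with hi1
  have hi1le : i1 ≤ 2 ^ (h + 2) - 1 := blockIdx_le a (h + 1) s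
  have h2 : (1:ℕ) ≤ 2 ^ (h + 1) := Nat.one_le_two_pow
  have h2' : (1:ℕ) ≤ 2 ^ (h + 2) := Nat.one_le_two_pow
  have hpow : (2:ℕ) ^ (h + 2) = 2 * 2 ^ (h + 1) := by ring
  have hhalf : i1 / 2 ≤ 2 ^ (h + 1) - 1 := by omega
  have hP : ∑ j ∈ Finset.range i1, a (h + 1) j ≤ s := S_blockIdx_le a (h + 1) s
  have hbig : ¬ ∑ j ∈ Finset.range (i1 + 1), a (h + 1) j ≤ s := by
    rcases Nat.lt_or_ge i1 (2 ^ (h + 2) - 1) with hl | hgeq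
    · have hfg : Nat.findGreatest (fun i => ∑ j ∈ Finset.range i, a (h + 1) j ≤ s)
          (2 ^ (h + 2) - 1) = i1 := rfl
      exact Nat.findGreatest_is_greatest
        (P := fun m => ∑ j ∈ Finset.range m, a (h + 1) j ≤ s) (n := 2 ^ (h + 2) - 1)
        (k := i1 + 1) (by rw [hfg]; omega) (by omega)
    · have hE : i1 + 1 = 2 ^ (h + 2) := by omega
      rw [hE, total ha (h + 1) hh]
      omega
  have hle : i1 / 2 ≤ blockIdx a h s := by
    rw [le_blockIdx_iff s hhalf, S_double ha hh (by omega)]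
    exact le_trans (S_mono a (h + 1) (by omega)) hP
  have hge : blockIdx a h s ≤ i1 / 2 := by
    by_contra hc
    have hc' : i1 / 2 + 1 ≤ blockIdx a h s := by omega
    have hS : ∑ j ∈ Finset.range (i1 / 2 + 1), a h j ≤ s :=
      le_trans (S_mono a h hc') (S_blockIdx_le a h s)
    rw [S_double ha hh (by omega)] at hS
    exact hbig (le_trans (S_mono a (h + 1) (by omega)) hS)
  omega

lemma blockIdx_nest' {k n : ℕ} {a : ℕ → ℕ → ℕ} (ha : NestedData k n a)
    {h' h : ℕ} (hle : h' ≤ h) (hh : h < k) {s : ℕ} (hs : s < n) :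
    blockIdx a h' s = blockIdx a h s / 2 ^ (h - h') := by
  obtain ⟨d, rfl⟩ := Nat.exists_eq_add_of_le hle
  clear hle
  induction d with
  | zero => simp
  | succ d ih =>
    have h1 : h' + d + 1 < k := by omega
    have := blockIdx_nest ha (h := h' + d) (by omega) hs
    rw [show h' + (d+1) = (h' + d) + 1 by omega] at *
    rw [ih (by omega), this, Nat.div_div_eq_div_mul]
    congr 1
    rw [show h' + d + 1 - h' = (h' + d - h') + 1 by omega, pow_succ]; ring

lemma blockIdx_eq_iff_pattern {k n : ℕ} {a : ℕ → ℕ → ℕ} (ha : NestedData k n a)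
    {h : ℕ} (hh : h < k) {i : ℕ} (hi : i < 2 ^ (h + 1)) (s : Fin n) :
    blockIdx a h (s : ℕ) = i ↔
      ∀ h', h' ≤ h → blockVec a h' n s = sgn (i.testBit (h - h')) := by
  have key : ∀ i', i' < 2 ^ (h + 1) → blockIdx a h (s : ℕ) = i' →
      ∀ h', h' ≤ h → blockVec a h' n s = sgn (i'.testBit (h - h')) := by
    intro i' hi' heq h' hh'
    have := blockIdx_nest' ha hh' hh (s := (s : ℕ)) s.2
    unfold blockVec sgn
    rw [this, heq, Nat.testBit_eq_decide_div_mod_eq]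
    rcases Nat.mod_two_eq_zero_or_one (i' / 2 ^ (h - h')) with h0 | h0 <;> simp [h0]
  constructor
  · exact key i hi
  · intro hp
    have hlt : blockIdx a h (s : ℕ) < 2 ^ (h + 1) := by
      have := blockIdx_le a h (s : ℕ)
      have : (1:ℕ) ≤ 2 ^ (h + 1) := Nat.one_le_two_pow
      omega
    have hp0 := key _ hlt rfl
    apply Nat.eq_of_testBit_eq
    intro p
    rcases Nat.lt_or_ge h p with hgt | hle
    · rw [Nat.testBit_lt_two_pow (lt_of_lt_of_le hlt (Nat.pow_le_pow_right (by norm_num) hgt)),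
        Nat.testBit_lt_two_pow (lt_of_lt_of_le hi (Nat.pow_le_pow_right (by norm_num) hgt))]
    · have hh' : h - p ≤ h := Nat.sub_le _ _
      have := (hp0 (h - p) hh').symm.trans (hp (h - p) hh')
      rw [show h - (h - p) = p by omega] at this
      exact sgn_inj this

lemma count_pattern {k n : ℕ} {a : ℕ → ℕ → ℕ} {Z : Fin k → Fin n → ℤˣ}
    {σ : Equiv.Perm (Fin n)}
    (ha : NestedData k n a)
    (hσ : ∀ h : Fin k, (fun s => Z h (σ⁻¹ s)) = blockVec a (h : ℕ) n)
    {h : ℕ} (hh : h < k) {i : ℕ} (hi : i < 2 ^ (h + 1)) :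
    a h i = (Finset.univ.filter fun t : Fin n =>
      ∀ h' : Fin k, (h' : ℕ) ≤ h → Z h' t = sgn (i.testBit (h - h'))).card := by
  rw [← card_blockIdx_eq ha hh hi]
  have hfe : (Finset.univ.filter fun s : Fin n => blockIdx a h (s : ℕ) = i)
      = Finset.univ.filter fun s : Fin n =>
          ∀ h' : Fin k, (h' : ℕ) ≤ h → Z h' (σ⁻¹ s) = sgn (i.testBit (h - h')) := by
    apply Finset.filter_congr
    intro s _
    simp only [blockIdx_eq_iff_pattern ha hh hi s]
    constructor
    · intro hp h' hh'
      rw [show Z h' (σ⁻¹ s) = blockVec a (h' : ℕ) n s from congrFun (hσ h') s]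
      exact hp h' hh'
    · intro hp h' hh'
      have hl : h' < k := lt_of_le_of_lt hh' hh
      have := hp ⟨h', hl⟩ hh'
      rwa [show Z ⟨h', hl⟩ (σ⁻¹ s) = blockVec a h' n s from congrFun (hσ ⟨h', hl⟩) s] at this
  rw [hfe]
  apply Finset.card_nbij' (fun s => σ⁻¹ s) (fun t => σ t)
  · intro s hs
    simp only [Finset.mem_coe, Finset.mem_filter, Finset.mem_univ, true_and] at *
    exact hs
  · intro t ht
    simp only [Finset.mem_coe, Finset.mem_filter, Finset.mem_univ, true_and] at *
    simpa using ht
  · intro s _; simp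
  · intro t _; simp

end Aux6

open Aux6 in
theorem statement6 {k n : ℕ} (hk : 1 ≤ k) (Z : Fin k → Fin n → ℤˣ)
    (hind : Nat.card (Subgroup.closure (Set.range Z) : Subgroup (Fin n → ℤˣ)) = 2 ^ k)
    (hneg : (fun _ => -1 : Fin n → ℤˣ) ∉ Subgroup.closure (Set.range Z))
    (j : Fin k) (Z' : Fin k → Fin n → ℤˣ)
    (hZ' : Z' = Function.update Z j (fun s => -(Z j s)))
    (a b : ℕ → ℕ → ℕ) (σ τ : Equiv.Perm (Fin n))
    (ha : NestedData k n a) (hσ : ∀ h : Fin k, permAct σ (Z h) = blockVec a (h : ℕ) n)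
    (hb : NestedData k n b) (hτ : ∀ h : Fin k, permAct τ (Z' h) = blockVec b (h : ℕ) n) :
    ∀ h < k, ∃ e : Equiv.Perm (Fin (2 ^ (h + 1))),
      ∀ i : Fin (2 ^ (h + 1)), b h (i : ℕ) = a h ((e i : Fin (2 ^ (h + 1))) : ℕ) := by
  intro h hh
  classical
  set c : ℕ := if (j : ℕ) ≤ h then 2 ^ (h - (j : ℕ)) else 0 with hc
  have hclt : c < 2 ^ (h + 1) := by
    rw [hc]
    split
    · exact lt_of_le_of_lt (Nat.pow_le_pow_right (by norm_num) (Nat.sub_le _ _))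
        (Nat.pow_lt_pow_right (by norm_num) (Nat.lt_succ_self h))
    · exact Nat.two_pow_pos _
  have hinv : Function.Involutive
      (fun i : Fin (2 ^ (h + 1)) => (⟨(i : ℕ) ^^^ c, Nat.xor_lt_two_pow i.2 hclt⟩ :
        Fin (2 ^ (h + 1)))) := by
    intro i
    apply Fin.ext
    exact (show (i : ℕ) ^^^ c ^^^ c = (i : ℕ) by rw [Nat.xor_assoc, Nat.xor_self, Nat.xor_zero])
  have keyp : ∀ (h' : Fin k), (h' : ℕ) ≤ h → ∀ (i : ℕ) (t : Fin n),
      (Z' h' t = sgn (Nat.testBit i (h - (h' : ℕ))) ↔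
        Z h' t = sgn (Nat.testBit (i ^^^ c) (h - (h' : ℕ)))) := by
    intro h' hh' i t
    rw [Nat.testBit_xor]
    by_cases hj : h' = j
    · subst hj
      have hcb : Nat.testBit c (h - (h' : ℕ)) = true := by
        rw [hc, if_pos hh']
        exact Nat.testBit_two_pow_self
      have hZ'j : Z' h' t = -(Z h' t) := by rw [hZ']; simp
      rw [hcb, hZ'j]
      simp only [Bool.xor_true, sgn_not]
      exact neg_eq_iff_eq_neg
    · have hz : Z' h' = Z h' := by rw [hZ']; exact Function.update_of_ne hj _ _
      have hcb : Nat.testBit c (h - (h' : ℕ)) = false := by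
        rw [hc]
        split
        · next hjh =>
          apply Nat.testBit_two_pow_of_ne
          intro hEq
          apply hj
          apply Fin.ext
          omega
        · exact Nat.zero_testBit _
      rw [hz, hcb, Bool.xor_false]
  have hbval : ∀ i : Fin (2 ^ (h + 1)), b h (i : ℕ) = a h ((i : ℕ) ^^^ c) := by
    intro i
    rw [count_pattern hb hτ hh i.2,
        count_pattern ha hσ hh (Nat.xor_lt_two_pow i.2 hclt)]
    refine congrArg Finset.card (Finset.filter_congr ?_)
    intro t _
    exact forall_congr' fun h' => imp_congr_right fun hh' => keyp h' hh' (i : ℕ) t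
  exact ⟨Function.Involutive.toPerm _ hinv, hbval⟩
end
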